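/- arXiv:1512.02518 — 5 statements merged into one kernel-verified Lean document; each statement's English description precedes it below -/
import Mathlib

section
/- Let R be a standard graded algebra over a field of prime characteristic p with irrelevant maximal ideal m, and let I ⊆ R be an m-primary ideal such that the F-threshold c^I(m) exists. Then c(I) − 1 ≤ c^I(m) ≤ c(I). -/
/-- The `q`-th Frobenius power of an ideal: the ideal generated by the `q`-th powers of its
elements. -/
def Ideal.frobPow {R : Type*} [CommRing R] (I : Ideal R) (q : ℕ) : Ideal R :=
  Ideal.span ((fun x => x ^ q) '' (I : Set R))

/-- Zeroth local cohomology with support in `J`: the submodule of elements annihilated by some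
power of `J`. -/
noncomputable def H0 {R : Type*} [CommRing R] (J : Ideal R)
    (M : Type*) [AddCommGroup M] [Module R M] : Submodule R M :=
  ⨆ k : ℕ, Submodule.torsionBySet R M ((J ^ k : Ideal R) : Set R)

/-- The length of a module, as the Krull dimension of its lattice of submodules. -/
noncomputable def modLength (R M : Type*) [CommRing R] [AddCommGroup M] [Module R M] :
    WithBot (WithTop ℕ) :=
  Order.krullDim (Submodule R M)

/-- ℕ-valued module length (with junk value `0` when the length is not finite). -/
noncomputable def modLengthNat (R M : Type*) [CommRing R] [AddCommGroup M] [Module R M] : ℕ :=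
  WithTop.untopD 0 (WithBot.unbotD 0 (modLength R M))

/-- Standard graded: the degree-zero piece is the base field and the algebra is generated in
degree one. -/
def IsStandardGraded {K R : Type*} [Field K] [CommRing R] [Algebra K R]
    (𝒜 : ℕ → Submodule K R) [GradedAlgebra 𝒜] : Prop :=
  𝒜 0 = (1 : Submodule K R) ∧ ∀ n : ℕ, 𝒜 (n + 1) = 𝒜 1 * 𝒜 n

section Aux
variable {R : Type*} [CommRing R]

lemma frobPow_mono {I J : Ideal R} (h : I ≤ J) (q : ℕ) : I.frobPow q ≤ J.frobPow q :=
  Ideal.span_mono (Set.image_mono h)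

lemma mem_frobPow {I : Ideal R} {x : R} (hx : x ∈ I) (q : ℕ) : x ^ q ∈ I.frobPow q :=
  Ideal.subset_span ⟨x, hx, rfl⟩

lemma frobPow_le_self {I : Ideal R} {q : ℕ} (hq : 0 < q) : I.frobPow q ≤ I := by
  rw [Ideal.frobPow, Ideal.span_le]
  rintro _ ⟨x, hx, rfl⟩
  exact Ideal.pow_mem_of_mem I hx q hq

lemma frobPow_mul_le (I J : Ideal R) (q : ℕ) :
    I.frobPow q * J.frobPow q ≤ (I * J).frobPow q := by
  rw [Ideal.frobPow, Ideal.frobPow, Ideal.span_mul_span', Ideal.span_le]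
  rintro _ ⟨_, ⟨x, hx, rfl⟩, _, ⟨y, hy, rfl⟩, rfl⟩
  have h2 := mem_frobPow (Ideal.mul_mem_mul hx hy) q
  rw [mul_pow] at h2
  exact h2

lemma frobPow_pow_le (I : Ideal R) (q k : ℕ) : (I.frobPow q) ^ k ≤ (I ^ k).frobPow q := by
  induction k with
  | zero =>
      simp only [pow_zero, Ideal.one_eq_top]
      rw [top_le_iff, Ideal.eq_top_iff_one]
      have h2 := mem_frobPow (Submodule.mem_top (x := (1 : R))) q
      rwa [one_pow] at h2
  | succ k ih =>
      rw [pow_succ, pow_succ]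
      exact le_trans (Ideal.mul_mono ih le_rfl) (frobPow_mul_le _ _ q)

lemma span_pow_card_le (s : Finset R) (q : ℕ) :
    Ideal.span (s : Set R) ^ (s.card * q + 1) ≤ (Ideal.span (s : Set R)).frobPow q := by
  classical
  induction s using Finset.induction_on with
  | empty => simp [Ideal.span_empty]
  | insert _ _ hx =>
      rename_i x t ih
      rw [Finset.coe_insert, Ideal.span_insert, Finset.card_insert_of_notMem hx]
      have he : (t.card + 1) * q + 1 = q + (t.card * q + 1) := by ring
      rw [he]
      refine le_trans Ideal.sup_pow_add_le_pow_sup_pow (sup_le ?_ ?_)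
      · rw [Ideal.span_singleton_pow, Ideal.span_le, Set.singleton_subset_iff]
        refine mem_frobPow ?_ q
        rw [← Ideal.span_insert]
        exact Ideal.subset_span (Set.mem_insert x _)
      · refine le_trans ih (frobPow_mono ?_ q)
        rw [← Ideal.span_insert]
        exact Ideal.span_mono (Set.subset_insert x _)

lemma smul_top_eq_bot_iff (J K : Ideal R) :
    J • (⊤ : Submodule R (R ⧸ K)) = ⊥ ↔ J ≤ K := by
  constructor
  · intro h a ha
    have : a • (Submodule.Quotient.mk (1 : R) : R ⧸ K) ∈ J • (⊤ : Submodule R (R ⧸ K)) :=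
      Submodule.smul_mem_smul ha Submodule.mem_top
    rw [h, Submodule.mem_bot, ← Submodule.Quotient.mk_smul, smul_eq_mul, mul_one,
      Submodule.Quotient.mk_eq_zero] at this
    exact this
  · intro h
    rw [eq_bot_iff]
    refine Submodule.smul_le.2 fun r hr n _ => ?_
    obtain ⟨x, rfl⟩ := Submodule.Quotient.mk_surjective K n
    rw [← Submodule.Quotient.mk_smul, Submodule.mem_bot, Submodule.Quotient.mk_eq_zero]
    exact K.mul_mem_right x (h hr)

lemma H0_eq_top {J K : Ideal R} {k : ℕ} (h : J ^ k ≤ K) : H0 J (R ⧸ K) = ⊤ := by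
  rw [eq_top_iff]
  refine le_trans ?_ (le_iSup (fun k => Submodule.torsionBySet R (R ⧸ K) ((J ^ k : Ideal R) : Set R)) k)
  intro x _
  rw [Submodule.mem_torsionBySet_iff]
  rintro ⟨a, ha⟩
  obtain ⟨r, rfl⟩ := Submodule.Quotient.mk_surjective K x
  rw [← Submodule.Quotient.mk_smul, Submodule.Quotient.mk_eq_zero]
  exact K.mul_mem_right r (h ha)

end Aux

open Filter in
/-- Observation 8.1: for an `m`-primary ideal `I` of a standard graded algebra over a field of
prime characteristic such that the F-threshold `c^I(m)` exists, one has
`c(I) − 1 ≤ c^I(m) ≤ c(I)`, where `ν(q) = max{ℓ : m^ℓ ⊄ I^[q]}`, `c^I(m) = lim ν(q)/q` and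
`c(I) = inf{b : m^{bq}·H⁰_m(R/I^[q]) = 0 for all q ≫ 0}`. -/
theorem fthreshold_between_c_sub_one_and_c
    {K R : Type*} [Field K] [CommRing R] [Algebra K R] [IsNoetherianRing R]
    (p : ℕ) [Fact p.Prime] [CharP K p]
    (𝒜 : ℕ → Submodule K R) [GradedAlgebra 𝒜]
    (hstd : IsStandardGraded 𝒜)
    (I : Ideal R)
    (hIm : I.radical = (HomogeneousIdeal.irrelevant 𝒜).toIdeal)
    (c : ℝ)
    (hc : Tendsto (fun n : ℕ =>
      ((sSup {ℓ : ℕ | ¬ (HomogeneousIdeal.irrelevant 𝒜).toIdeal ^ ℓ ≤ I.frobPow (p ^ n)} : ℕ) : ℝ)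
        / (p : ℝ) ^ n) atTop (nhds c)) :
    ((sInf {b : ℕ | ∀ᶠ n : ℕ in atTop,
        ((HomogeneousIdeal.irrelevant 𝒜).toIdeal ^ (b * p ^ n)) •
          H0 ((HomogeneousIdeal.irrelevant 𝒜).toIdeal) (R ⧸ I.frobPow (p ^ n)) = ⊥} : ℕ) : ℝ)
        - 1 ≤ c ∧
    c ≤ (sInf {b : ℕ | ∀ᶠ n : ℕ in atTop,
        ((HomogeneousIdeal.irrelevant 𝒜).toIdeal ^ (b * p ^ n)) •
          H0 ((HomogeneousIdeal.irrelevant 𝒜).toIdeal) (R ⧸ I.frobPow (p ^ n)) = ⊥} : ℕ) := by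
  have hp : 0 < p := (Fact.out : p.Prime).pos
  have hq1 : ∀ n : ℕ, 1 ≤ p ^ n := fun n => Nat.one_le_pow n p hp
  have hqR : ∀ n : ℕ, (0 : ℝ) < (p : ℝ) ^ n := fun n =>
    pow_pos (by exact_mod_cast hp) n
  set m : Ideal R := (HomogeneousIdeal.irrelevant 𝒜).toIdeal with hm
  rcases subsingleton_or_nontrivial R with hR | hR
  · -- trivial ring
    have hall : ∀ (A B : Ideal R), A ≤ B := fun A B => le_of_eq (Subsingleton.elim A B)
    have hν : (fun n : ℕ =>
        ((sSup {ℓ : ℕ | ¬ m ^ ℓ ≤ I.frobPow (p ^ n)} : ℕ) : ℝ) / (p : ℝ) ^ n)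
        = fun _ : ℕ => (0 : ℝ) := by
      funext n
      have : {ℓ : ℕ | ¬ m ^ ℓ ≤ I.frobPow (p ^ n)} = (∅ : Set ℕ) := by
        ext ℓ; simp [hall]
      rw [this, csSup_empty]
      simp
    have hc0 : c = 0 := by
      refine tendsto_nhds_unique hc ?_
      rw [hν]; exact tendsto_const_nhds
    have h0B : (0 : ℕ) ∈ {b : ℕ | ∀ᶠ n : ℕ in atTop,
        (m ^ (b * p ^ n)) • H0 m (R ⧸ I.frobPow (p ^ n)) = ⊥} := by
      refine Eventually.of_forall fun n => ?_
      have : Subsingleton (R ⧸ I.frobPow (p ^ n)) :=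
        (Submodule.Quotient.mk_surjective _).subsingleton
      exact Subsingleton.elim _ _
    rw [Nat.sInf_eq_zero.mpr (Or.inl h0B), hc0]
    norm_num
  · -- nontrivial ring
    have hm1 : (1 : R) ∉ m := by
      intro h
      rw [hm, HomogeneousIdeal.toIdeal_irrelevant, RingHom.mem_ker, map_one] at h
      exact one_ne_zero h
    obtain ⟨s, hs⟩ : m.FG := IsNoetherian.noetherian m
    obtain ⟨k0, hk0⟩ := Ideal.exists_radical_pow_le_of_fg I (by rw [hIm]; exact IsNoetherian.noetherian m)
    rw [hIm] at hk0
    set k : ℕ := k0 + 1 with hkdef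
    have hk : m ^ k ≤ I := le_trans (Ideal.pow_le_pow_right (Nat.le_succ k0)) hk0
    set b0 : ℕ := k * (s.card + 1) with hb0
    have hkey : ∀ n : ℕ, m ^ (b0 * p ^ n) ≤ I.frobPow (p ^ n) := by
      intro n
      set q := p ^ n with hqdef
      have h1 : k * (s.card * q + 1) ≤ b0 * q := by
        rw [hb0, mul_assoc]
        refine Nat.mul_le_mul_left k ?_
        have hq : 1 ≤ q := by rw [hqdef]; exact hq1 n
        nlinarith
      calc m ^ (b0 * q) ≤ m ^ (k * (s.card * q + 1)) := Ideal.pow_le_pow_right h1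
        _ = (m ^ (s.card * q + 1)) ^ k := by rw [mul_comm, pow_mul]
        _ ≤ (m.frobPow q) ^ k := by
            rw [← hs]
            exact Ideal.pow_right_mono (span_pow_card_le s q) k
        _ ≤ (m ^ k).frobPow q := frobPow_pow_le m q k
        _ ≤ I.frobPow q := frobPow_mono hk q
    have hH0 : ∀ n : ℕ, H0 m (R ⧸ I.frobPow (p ^ n)) = ⊤ := fun n => H0_eq_top (hkey n)
    have hBiff : ∀ (b n : ℕ),
        ((m ^ (b * p ^ n)) • H0 m (R ⧸ I.frobPow (p ^ n)) = ⊥)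
          ↔ m ^ (b * p ^ n) ≤ I.frobPow (p ^ n) := by
      intro b n
      rw [hH0 n]
      exact smul_top_eq_bot_iff _ _
    have hIq_ne : ∀ n : ℕ, I.frobPow (p ^ n) ≠ ⊤ := by
      intro n h
      refine hm1 (hIm ▸ Ideal.le_radical ?_)
      exact frobPow_le_self (hq1 n) (h ▸ Submodule.mem_top)
    have h0S : ∀ n : ℕ, 0 ∈ {ℓ : ℕ | ¬ m ^ ℓ ≤ I.frobPow (p ^ n)} := by
      intro n h
      rw [pow_zero, Ideal.one_eq_top, top_le_iff] at h
      exact hIq_ne n h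
    have hSlt : ∀ n : ℕ, ∀ ℓ ∈ {ℓ : ℕ | ¬ m ^ ℓ ≤ I.frobPow (p ^ n)}, ℓ < b0 * p ^ n := by
      intro n ℓ hℓ
      by_contra h
      push_neg at h
      exact hℓ (le_trans (Ideal.pow_le_pow_right h) (hkey n))
    have hbdd : ∀ n : ℕ, BddAbove {ℓ : ℕ | ¬ m ^ ℓ ≤ I.frobPow (p ^ n)} :=
      fun n => ⟨b0 * p ^ n, fun ℓ hℓ => le_of_lt (hSlt n ℓ hℓ)⟩
    have hν_mem : ∀ n : ℕ,
        sSup {ℓ : ℕ | ¬ m ^ ℓ ≤ I.frobPow (p ^ n)} ∈ {ℓ : ℕ | ¬ m ^ ℓ ≤ I.frobPow (p ^ n)} :=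
      fun n => Nat.sSup_mem ⟨0, h0S n⟩ (hbdd n)
    have hle_iff : ∀ (n a : ℕ), m ^ a ≤ I.frobPow (p ^ n) ↔
        sSup {ℓ : ℕ | ¬ m ^ ℓ ≤ I.frobPow (p ^ n)} < a := by
      intro n a
      constructor
      · intro h
        by_contra h'
        push_neg at h'
        exact hν_mem n (le_trans (Ideal.pow_le_pow_right h') h)
      · intro h
        by_contra h'
        exact absurd (le_csSup (hbdd n) h') (not_le.mpr h)
    set B : Set ℕ := {b : ℕ | ∀ᶠ n : ℕ in atTop,
        (m ^ (b * p ^ n)) • H0 m (R ⧸ I.frobPow (p ^ n)) = ⊥} with hB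
    have hb0B : b0 ∈ B := Eventually.of_forall fun n => (hBiff b0 n).mpr (hkey n)
    have haB : sInf B ∈ B := Nat.sInf_mem ⟨b0, hb0B⟩
    constructor
    · -- sInf B - 1 ≤ c
      rcases Nat.eq_zero_or_pos (sInf B) with h0 | hpos
      · have hc0 : 0 ≤ c := by
          refine ge_of_tendsto hc (Eventually.of_forall fun n => ?_)
          positivity
        rw [h0]
        simpa using by linarith
      · set a' : ℕ := sInf B - 1 with ha'
        have hA : sInf B = a' + 1 := (Nat.succ_pred_eq_of_pos hpos).symm
        have ha'B : a' ∉ B := Nat.notMem_of_lt_sInf (by omega)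
        have hfreq : ∃ᶠ n in atTop,
            ¬ (m ^ (a' * p ^ n)) • H0 m (R ⧸ I.frobPow (p ^ n)) = ⊥ :=
          Filter.not_eventually.mp ha'B
        have hfreq' : ∃ᶠ n in atTop, (fun n : ℕ =>
            ((sSup {ℓ : ℕ | ¬ m ^ ℓ ≤ I.frobPow (p ^ n)} : ℕ) : ℝ) / (p : ℝ) ^ n) n
              ∈ Set.Ici (a' : ℝ) := by
          refine hfreq.mono fun n hn => ?_
          have h1 : ¬ m ^ (a' * p ^ n) ≤ I.frobPow (p ^ n) := fun h => hn ((hBiff a' n).mpr h)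
          have h2 : a' * p ^ n ≤ sSup {ℓ : ℕ | ¬ m ^ ℓ ≤ I.frobPow (p ^ n)} := by
            by_contra h'
            push_neg at h'
            exact h1 ((hle_iff n _).mpr h')
          rw [Set.mem_Ici, le_div_iff₀ (hqR n)]
          exact_mod_cast h2
        have := mem_closure_of_frequently_of_tendsto hfreq' hc
        rw [isClosed_Ici.closure_eq, Set.mem_Ici] at this
        rw [hA]
        push_cast
        linarith
    · -- c ≤ sInf B
      refine le_of_tendsto hc ?_
      refine haB.mono fun n hn => ?_
      have h1 : sSup {ℓ : ℕ | ¬ m ^ ℓ ≤ I.frobPow (p ^ n)} < sInf B * p ^ n :=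
        (hle_iff n _).mp ((hBiff (sInf B) n).mp hn)
      rw [div_le_iff₀ (hqR n)]
      exact_mod_cast le_of_lt h1
end

section
/- Let R be a standard graded ring over a field of prime characteristic p and let M be a finitely generated graded R-module. If end(H⁰_m(Fⁿ(M))) ≤ aq + c for all q = pⁿ, for some constants a and c not depending on q, then M satisfies the (LC) property: there exists b ∈ ℕ₀, independent of q, such that m^{bq}·H⁰_m(Fⁿ(M)) = 0 for all q. -/
/-- `R` viewed as an `R`-algebra via the ring endomorphism `φ` (e.g. a power of the Frobenius). -/
def FrobAlg (R : Type*) [CommRing R] (_φ : R →+* R) : Type _ := R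

instance FrobAlg.commRing (R : Type*) [CommRing R] (φ : R →+* R) : CommRing (FrobAlg R φ) :=
  inferInstanceAs (CommRing R)

instance FrobAlg.algebra (R : Type*) [CommRing R] (φ : R →+* R) : Algebra R (FrobAlg R φ) :=
  (show R →+* FrobAlg R φ from φ).toAlgebra

/-- The identity map of `R`, viewed as landing in `FrobAlg R φ`. -/
def FrobAlg.of (R : Type*) [CommRing R] (φ : R →+* R) : R → FrobAlg R φ := id

/-- The Peskine–Szpiro (Frobenius) functor `Fⁿ(M) = Fⁿ(R) ⊗_R M`, realized as base change
of `M` along `φ` (for `φ` the `n`-th iterate of the Frobenius). -/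
def FrobMod (R : Type*) [CommRing R] (φ : R →+* R)
    (M : Type*) [AddCommGroup M] [Module R M] : Type _ :=
  TensorProduct R (FrobAlg R φ) M

noncomputable instance FrobMod.addCommGroup (R : Type*) [CommRing R] (φ : R →+* R)
    (M : Type*) [AddCommGroup M] [Module R M] : AddCommGroup (FrobMod R φ M) :=
  inferInstanceAs (AddCommGroup (TensorProduct R (FrobAlg R φ) M))

noncomputable instance FrobMod.module (R : Type*) [CommRing R] (φ : R →+* R)
    (M : Type*) [AddCommGroup M] [Module R M] : Module R (FrobMod R φ M) :=
  inferInstanceAs (Module (FrobAlg R φ) (TensorProduct R (FrobAlg R φ) M))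

set_option maxHeartbeats 1000000
set_option synthInstance.maxHeartbeats 400000

open DirectSum

section FrobGrading

variable {K R : Type*} [Field K] [CommRing R] [Algebra K R]
  (𝒜 : ℕ → Submodule K R) [GradedAlgebra 𝒜]
  (φ : R →+* R)
  {M : Type*} [AddCommGroup M] [Module R M] [Module K M] [IsScalarTower K R M]
  (ℳ : ℤ → Submodule K M) [DirectSum.Decomposition ℳ]
  (q : ℤ)

/-- An elementary tensor in `FrobMod R φ M`, with the ambient type forced to `FrobMod`. -/
noncomputable def ftm (u : R) (x : M) : FrobMod R φ M := (FrobAlg.of R φ u) ⊗ₜ[R] x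

lemma ftm_def (u : R) (x : M) : ftm φ u x = (FrobAlg.of R φ u) ⊗ₜ[R] x := rfl

lemma ftm_add_left (u u' : R) (x : M) : ftm φ (u + u') x = ftm φ u x + ftm φ u' x :=
  TensorProduct.add_tmul _ _ _

lemma ftm_add_right (u : R) (x x' : M) : ftm φ u (x + x') = ftm φ u x + ftm φ u x' :=
  TensorProduct.tmul_add _ _ _

lemma ftm_zero_left (x : M) : ftm φ 0 x = 0 := TensorProduct.zero_tmul _ _

lemma ftm_zero_right (u : R) : ftm φ u (0 : M) = (0 : FrobMod R φ M) := by
  show (FrobAlg.of R φ u) ⊗ₜ[R] (0 : M) = (0 : TensorProduct R (FrobAlg R φ) M)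
  exact TensorProduct.tmul_zero _ _

lemma frob_smul_ftm (g u : R) (x : M) :
    g • ftm φ u x = ftm φ (g * u) x := by
  show (FrobAlg.of R φ g) • ((FrobAlg.of R φ u) ⊗ₜ[R] x : TensorProduct R (FrobAlg R φ) M)
      = (FrobAlg.of R φ (g * u)) ⊗ₜ[R] x
  rw [TensorProduct.smul_tmul']
  rfl

lemma frob_smul_def (r u : R) :
    r • (FrobAlg.of R φ u) = FrobAlg.of R φ (φ r * u) := by
  rw [Algebra.smul_def, RingHom.algebraMap_toAlgebra]
  rfl

noncomputable def innerF (α : ℕ) (u : R) : M →+ (⨁ _ : ℤ, FrobMod R φ M) :=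
  (DirectSum.toAddMonoid fun β : ℤ =>
    (DirectSum.of (fun _ : ℤ => FrobMod R φ M) ((α : ℤ) + q * β)).comp
      (AddMonoidHom.mk' (fun v : ℳ β => ftm φ u (v : M)) (fun v v' => by
        show ftm φ u ((v + v' : ℳ β) : M) = ftm φ u (v : M) + ftm φ u (v' : M)
        rw [Submodule.coe_add, ftm_add_right]))).comp
    (DirectSum.decomposeAddEquiv ℳ).toAddMonoidHom

lemma innerF_apply_of_mem (α : ℕ) (u : R) {β : ℤ} {v : M} (hv : v ∈ ℳ β) :
    innerF φ ℳ q α u v =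
      DirectSum.of (fun _ : ℤ => FrobMod R φ M) ((α : ℤ) + q * β) (ftm φ u v) := by
  unfold innerF
  simp only [AddMonoidHom.comp_apply, AddEquiv.coe_toAddMonoidHom, decomposeAddEquiv_apply,
    DirectSum.decompose_of_mem ℳ hv, DirectSum.toAddMonoid_of]
  rfl

lemma innerF_add (α : ℕ) (u u' : R) :
    innerF φ ℳ q α (u + u') = innerF φ ℳ q α u + innerF φ ℳ q α u' := by
  refine AddMonoidHom.ext fun x => ?_
  refine DirectSum.Decomposition.inductionOn ℳ
    (motive := fun x => innerF φ ℳ q α (u + u') x = (innerF φ ℳ q α u + innerF φ ℳ q α u') x)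
    ?_ ?_ ?_ x
  · simp
  · rintro β ⟨v, hv⟩
    rw [AddMonoidHom.add_apply, innerF_apply_of_mem φ ℳ q α _ hv,
      innerF_apply_of_mem φ ℳ q α _ hv, innerF_apply_of_mem φ ℳ q α _ hv,
      ← map_add, ← ftm_add_left]
  · intro m m' hm hm'
    simp only [map_add, AddMonoidHom.add_apply] at hm hm' ⊢
    rw [hm, hm']
    try abel

noncomputable def fAux : R →+ M →+ (⨁ _ : ℤ, FrobMod R φ M) :=
  (DirectSum.toAddMonoid fun α : ℕ =>
    AddMonoidHom.mk' (fun u : 𝒜 α => innerF φ ℳ q α u)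
      (fun u u' => by
        show innerF φ ℳ q α ((u : R) + (u' : R)) = _
        exact innerF_add φ ℳ q α u u')).comp
    (DirectSum.decomposeAddEquiv 𝒜).toAddMonoidHom

lemma fAux_apply_of_mem {α : ℕ} {u : R} (hu : u ∈ 𝒜 α) {β : ℤ} {v : M} (hv : v ∈ ℳ β) :
    fAux 𝒜 φ ℳ q u v =
      DirectSum.of (fun _ : ℤ => FrobMod R φ M) ((α : ℤ) + q * β) (ftm φ u v) := by
  unfold fAux
  simp only [AddMonoidHom.comp_apply, AddEquiv.coe_toAddMonoidHom, decomposeAddEquiv_apply,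
    DirectSum.decompose_of_mem 𝒜 hu, DirectSum.toAddMonoid_of, AddMonoidHom.mk'_apply]
  exact innerF_apply_of_mem φ ℳ q α u hv

noncomputable def PhiAux
    (hbal : ∀ (r : R) (a : FrobAlg R φ) (x : M),
      fAux 𝒜 φ ℳ q (r • a) x = fAux 𝒜 φ ℳ q a (r • x)) :
    FrobMod R φ M →+ (⨁ _ : ℤ, FrobMod R φ M) :=
  TensorProduct.liftAddHom (show FrobAlg R φ →+ M →+ _ from fAux 𝒜 φ ℳ q) hbal

lemma PhiAux_ftm (hbal : ∀ (r : R) (a : FrobAlg R φ) (x : M),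
      fAux 𝒜 φ ℳ q (r • a) x = fAux 𝒜 φ ℳ q a (r • x)) (u : R) (x : M) :
    PhiAux 𝒜 φ ℳ q hbal (ftm φ u x) = fAux 𝒜 φ ℳ q u x := rfl

end FrobGrading

-- chunk 2 appended to t1
section FrobGrading2

open DirectSum

variable {K R : Type*} [Field K] [CommRing R] [Algebra K R]
  (𝒜 : ℕ → Submodule K R) [GradedAlgebra 𝒜]
  (φ : R →+* R)
  {M : Type*} [AddCommGroup M] [Module R M] [Module K M] [IsScalarTower K R M]
  (ℳ : ℤ → Submodule K M) [DirectSum.Decomposition ℳ]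
  (q : ℤ)

lemma FrobAlg.of_apply (y : R) : FrobAlg.of R φ y = y := rfl

lemma ftm_induction (P : FrobMod R φ M → Prop) (h0 : P 0)
    (hhom : ∀ (α : ℕ) (u : R), u ∈ 𝒜 α → ∀ (β : ℤ) (v : M), v ∈ ℳ β → P (ftm φ u v))
    (hadd : ∀ z z', P z → P z' → P (z + z')) : ∀ z, P z := by
  have hftm : ∀ (u : R) (x : M), P (ftm φ u x) := by
    intro u
    refine DirectSum.Decomposition.inductionOn 𝒜 (motive := fun u => ∀ x, P (ftm φ u x)) ?_ ?_ ?_ u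
    · intro x; rw [ftm_zero_left]; exact h0
    · rintro α ⟨u, hu⟩ x
      refine DirectSum.Decomposition.inductionOn ℳ (motive := fun x => P (ftm φ u x)) ?_ ?_ ?_ x
      · show P (ftm φ u (0 : M)); rw [ftm_zero_right]; exact h0
      · rintro β ⟨v, hv⟩; exact hhom α u hu β v hv
      · intro x y hx hy
        show P (ftm φ u (x + y))
        rw [ftm_add_right]; exact hadd _ _ hx hy
    · intro u u' hu hu' x; rw [ftm_add_left]; exact hadd _ _ (hu x) (hu' x)
  intro z
  exact TensorProduct.induction_on z h0 (fun a x => hftm a x) hadd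

lemma fAux_balance
    (hgsmul : ∀ (i : ℕ) (j : ℤ) (r : R) (x : M), r ∈ 𝒜 i → x ∈ ℳ j → r • x ∈ ℳ (i + j))
    (e : ℕ) (hq : q = (e : ℤ))
    (hφmem : ∀ (i : ℕ) (r : R), r ∈ 𝒜 i → φ r ∈ 𝒜 (e * i)) :
    ∀ (r : R) (a : FrobAlg R φ) (x : M),
      fAux 𝒜 φ ℳ q (r • a) x = fAux 𝒜 φ ℳ q a (r • x) := by
  have hcore : ∀ (i : ℕ) (ρ : R), ρ ∈ 𝒜 i → ∀ (α : ℕ) (u : R), u ∈ 𝒜 α →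
      ∀ (β : ℤ) (v : M), v ∈ ℳ β →
      fAux 𝒜 φ ℳ q (ρ • FrobAlg.of R φ u) v = fAux 𝒜 φ ℳ q u (ρ • v) := by
    intro i ρ hρ α u hu β v hv
    rw [frob_smul_def, FrobAlg.of_apply]
    have h2 : φ ρ * u ∈ 𝒜 (e * i + α) := SetLike.mul_mem_graded (hφmem i ρ hρ) hu
    have h3 : ρ • v ∈ ℳ ((i : ℤ) + β) := hgsmul i β ρ v hρ hv
    rw [fAux_apply_of_mem 𝒜 φ ℳ q h2 hv, fAux_apply_of_mem 𝒜 φ ℳ q hu h3]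
    have hidx : ((e * i + α : ℕ) : ℤ) + q * β = (α : ℤ) + q * ((i : ℤ) + β) := by
      subst hq; push_cast; ring
    rw [hidx]
    congr 1
    rw [ftm_def, ftm_def]
    rw [show FrobAlg.of R φ (φ ρ * u) = ρ • FrobAlg.of R φ u from (frob_smul_def φ ρ u).symm]
    exact TensorProduct.smul_tmul ρ _ v
  have hstep : ∀ (i : ℕ) (ρ : R), ρ ∈ 𝒜 i → ∀ (a : R) (x : M),
      fAux 𝒜 φ ℳ q (ρ • FrobAlg.of R φ a) x = fAux 𝒜 φ ℳ q a (ρ • x) := by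
    intro i ρ hρ a
    refine DirectSum.Decomposition.inductionOn 𝒜
      (motive := fun a => ∀ x, fAux 𝒜 φ ℳ q (ρ • FrobAlg.of R φ a) x = fAux 𝒜 φ ℳ q a (ρ • x))
      ?_ ?_ ?_ a
    · intro x
      have : ρ • FrobAlg.of R φ (0 : R) = FrobAlg.of R φ 0 := by
        rw [frob_smul_def, mul_zero]
      rw [this]
      show fAux 𝒜 φ ℳ q (0 : R) x = fAux 𝒜 φ ℳ q (0 : R) (ρ • x)
      rw [map_zero]; rfl
    · rintro α ⟨u, hu⟩ x
      refine DirectSum.Decomposition.inductionOn ℳ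
        (motive := fun x => fAux 𝒜 φ ℳ q (ρ • FrobAlg.of R φ u) x = fAux 𝒜 φ ℳ q u (ρ • x))
        ?_ ?_ ?_ x
      · show fAux 𝒜 φ ℳ q (ρ • FrobAlg.of R φ u) (0 : M) = fAux 𝒜 φ ℳ q u (ρ • (0 : M))
        rw [smul_zero, map_zero, map_zero]
      · rintro β ⟨v, hv⟩; exact hcore _ ρ hρ α u hu β v hv
      · intro x y hx hy
        show fAux 𝒜 φ ℳ q (ρ • FrobAlg.of R φ u) (x + y) = fAux 𝒜 φ ℳ q u (ρ • (x + y))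
        rw [smul_add, map_add, map_add, hx, hy]
    · intro a a' ha ha' x
      have : ρ • FrobAlg.of R φ (a + a') = ρ • FrobAlg.of R φ a + ρ • FrobAlg.of R φ a' := by
        rw [frob_smul_def, frob_smul_def, frob_smul_def, mul_add]
        rfl
      have e2 : fAux 𝒜 φ ℳ q (ρ • FrobAlg.of R φ (a + a')) =
          fAux 𝒜 φ ℳ q (ρ • FrobAlg.of R φ a) + fAux 𝒜 φ ℳ q (ρ • FrobAlg.of R φ a') := by
        rw [this]; exact map_add _ _ _
      rw [e2, map_add, AddMonoidHom.add_apply, AddMonoidHom.add_apply, ha x, ha' x]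
  intro r
  refine DirectSum.Decomposition.inductionOn 𝒜
    (motive := fun r => ∀ (a : FrobAlg R φ) (x : M),
      fAux 𝒜 φ ℳ q (r • a) x = fAux 𝒜 φ ℳ q a (r • x)) ?_ ?_ ?_ r
  · intro a x
    have e1 : fAux 𝒜 φ ℳ q ((0 : R) • a) = fAux 𝒜 φ ℳ q (0 : R) := congrArg _ (zero_smul R a)
    exact (congrArg (fun f => f x) e1).trans
      (show fAux 𝒜 φ ℳ q (0 : R) x = fAux 𝒜 φ ℳ q a ((0 : R) • x) by simp)
  · rintro i ⟨ρ, hρ⟩ a x; exact hstep i ρ hρ a x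
  · intro r r' h h' a x
    have e1 : fAux 𝒜 φ ℳ q ((r + r') • a) = fAux 𝒜 φ ℳ q (r • a) + fAux 𝒜 φ ℳ q (r' • a) := by
      exact (congrArg _ (add_smul r r' a)).trans (map_add _ _ _)
    exact (congrArg (fun f => f x) e1).trans
      ((congrArg₂ (· + ·) (h a x) (h' a x)).trans (by rw [add_smul, map_add]))

end FrobGrading2

section FrobGrading3

open DirectSum

variable {K R : Type*} [Field K] [CommRing R] [Algebra K R]
  (𝒜 : ℕ → Submodule K R) [GradedAlgebra 𝒜]
  (φ : R →+* R)
  {M : Type*} [AddCommGroup M] [Module R M] [Module K M] [IsScalarTower K R M]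
  (ℳ : ℤ → Submodule K M) [DirectSum.Decomposition ℳ]
  (q : ℤ)

/-- The generating set of the degree-`t` homogeneous component of `FrobMod`. -/
def NNset (t : ℤ) : Set (FrobMod R φ M) :=
  {z : FrobMod R φ M |
    ∃ (α : ℕ) (β : ℤ) (r : R) (x : M), r ∈ 𝒜 α ∧ x ∈ ℳ β ∧
      (α : ℤ) + q * β = t ∧ z = (FrobAlg.of R φ r) ⊗ₜ[R] x}

/-- The degree-`t` homogeneous component of `FrobMod` (as an additive subgroup). -/
noncomputable def NN (t : ℤ) : AddSubgroup (FrobMod R φ M) := AddSubgroup.closure (NNset 𝒜 φ ℳ q t)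

variable (hbal : ∀ (r : R) (a : FrobAlg R φ) (x : M),
      fAux 𝒜 φ ℳ q (r • a) x = fAux 𝒜 φ ℳ q a (r • x))

include hbal

lemma PhiAux_sigma (z : FrobMod R φ M) :
    DirectSum.toAddMonoid (fun _ : ℤ => AddMonoidHom.id (FrobMod R φ M))
      (PhiAux 𝒜 φ ℳ q hbal z) = z := by
  refine ftm_induction 𝒜 φ ℳ
    (P := fun z => DirectSum.toAddMonoid (fun _ : ℤ => AddMonoidHom.id (FrobMod R φ M))
      (PhiAux 𝒜 φ ℳ q hbal z) = z) ?_ ?_ ?_ z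
  · beta_reduce
    rw [map_zero, map_zero]
  · intro α u hu β v hv
    beta_reduce
    rw [PhiAux_ftm, fAux_apply_of_mem 𝒜 φ ℳ q hu hv, DirectSum.toAddMonoid_of]
    rfl
  · intro z z' h h'
    beta_reduce at h h' ⊢
    rw [map_add, map_add, h, h']

lemma PhiAux_component_mem (z : FrobMod R φ M) (t : ℤ) :
    PhiAux 𝒜 φ ℳ q hbal z t ∈ NN 𝒜 φ ℳ q t := by
  refine ftm_induction 𝒜 φ ℳ
    (P := fun z => ∀ t : ℤ, PhiAux 𝒜 φ ℳ q hbal z t ∈ NN 𝒜 φ ℳ q t) ?_ ?_ ?_ z t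
  · intro t
    beta_reduce
    rw [map_zero, DirectSum.zero_apply]
    exact zero_mem _
  · intro α u hu β v hv t
    beta_reduce
    rw [PhiAux_ftm, fAux_apply_of_mem 𝒜 φ ℳ q hu hv]
    by_cases ht : (α : ℤ) + q * β = t
    · subst ht
      rw [DirectSum.of_eq_same]
      exact AddSubgroup.subset_closure ⟨α, β, u, v, hu, hv, rfl, rfl⟩
    · rw [DirectSum.of_eq_of_ne _ _ _ (Ne.symm ht)]
      exact zero_mem _
  · intro z z' h h' t
    beta_reduce at h h' ⊢
    rw [map_add, DirectSum.add_apply]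
    exact add_mem (h t) (h' t)

lemma PhiAux_shift (k : ℕ) (h : R) (hh : h ∈ 𝒜 k) (z : FrobMod R φ M) (t : ℤ) :
    PhiAux 𝒜 φ ℳ q hbal (h • z) t = h • (PhiAux 𝒜 φ ℳ q hbal z (t - (k : ℤ))) := by
  refine ftm_induction 𝒜 φ ℳ
    (P := fun z => ∀ t : ℤ, PhiAux 𝒜 φ ℳ q hbal (h • z) t
      = h • (PhiAux 𝒜 φ ℳ q hbal z (t - (k : ℤ)))) ?_ ?_ ?_ z t
  · intro t
    beta_reduce
    rw [smul_zero, map_zero, DirectSum.zero_apply, DirectSum.zero_apply, smul_zero]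
  · intro α u hu β v hv t
    beta_reduce
    have hmul : h * u ∈ 𝒜 (k + α) := SetLike.mul_mem_graded hh hu
    rw [frob_smul_ftm, PhiAux_ftm, PhiAux_ftm, fAux_apply_of_mem 𝒜 φ ℳ q hmul hv,
      fAux_apply_of_mem 𝒜 φ ℳ q hu hv]
    by_cases ht : ((k + α : ℕ) : ℤ) + q * β = t
    · rw [← ht, DirectSum.of_eq_same]
      have ht2 : ((k + α : ℕ) : ℤ) + q * β - (k : ℤ) = (α : ℤ) + q * β := by push_cast; ring
      rw [ht2, DirectSum.of_eq_same, frob_smul_ftm]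
    · rw [DirectSum.of_eq_of_ne _ _ _ (Ne.symm ht)]
      have ht2 : (α : ℤ) + q * β ≠ t - (k : ℤ) := by
        intro hE
        apply ht
        push_cast
        linarith
      rw [DirectSum.of_eq_of_ne _ _ _ (Ne.symm ht2), smul_zero]
  · intro z z' hz hz' t
    beta_reduce at hz hz' ⊢
    rw [smul_add, map_add, DirectSum.add_apply, hz, hz', map_add, DirectSum.add_apply, smul_add]

lemma PhiAux_eq_of_mem_NN (t : ℤ) (z : FrobMod R φ M) (hz : z ∈ NN 𝒜 φ ℳ q t) :
    PhiAux 𝒜 φ ℳ q hbal z = DirectSum.of (fun _ : ℤ => FrobMod R φ M) t z := by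
  refine AddSubgroup.closure_induction ?_ ?_ ?_ ?_ hz
  · rintro z ⟨α, β, r, x, hr, hx, hidx, rfl⟩
    show PhiAux 𝒜 φ ℳ q hbal (ftm φ r x) = _
    rw [PhiAux_ftm, fAux_apply_of_mem 𝒜 φ ℳ q hr hx, hidx]
    rfl
  · rw [map_zero, map_zero]
  · intro a b _ _ hA hB
    rw [map_add, hA, hB, map_add]
  · intro a _ hA
    rw [map_neg, hA, map_neg]

omit hbal

lemma NN_smul (d : ℕ) (g : R) (hg : g ∈ 𝒜 d) (t : ℤ) (z : FrobMod R φ M)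
    (hz : z ∈ NN 𝒜 φ ℳ q t) : g • z ∈ NN 𝒜 φ ℳ q (t + (d : ℤ)) := by
  refine AddSubgroup.closure_induction ?_ ?_ ?_ ?_ hz
  · rintro z ⟨α, β, r, x, hr, hx, hidx, rfl⟩
    refine AddSubgroup.subset_closure
      ⟨d + α, β, g * r, x, SetLike.mul_mem_graded hg hr, hx, ?_, ?_⟩
    · push_cast
      linarith
    · show g • (ftm φ r x) = ftm φ (g * r) x
      exact frob_smul_ftm φ g r x
  · rw [smul_zero]
    exact zero_mem _
  · intro a b _ _ hA hB
    rw [smul_add]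
    exact add_mem hA hB
  · intro a _ hA
    rw [smul_neg]
    exact neg_mem hA

lemma NN_eq_zero_of_lt (β₀ : ℤ) (hβ₀ : ∀ β < β₀, ℳ β = ⊥) (hq : 0 < q) (t : ℤ)
    (ht : t < q * β₀) : ∀ z ∈ NN 𝒜 φ ℳ q t, z = 0 := by
  intro z hz
  have hle : NN 𝒜 φ ℳ q t ≤ ⊥ := by
    refine (AddSubgroup.closure_le _).mpr ?_
    rintro z ⟨α, β, r, x, hr, hx, hidx, rfl⟩
    have hβ : β < β₀ := by
      by_contra hcon
      push_neg at hcon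
      have h1 : q * β₀ ≤ q * β := mul_le_mul_of_nonneg_left hcon hq.le
      have h2 : (0 : ℤ) ≤ (α : ℤ) := Int.natCast_nonneg α
      linarith
    have hx0 : x = 0 := by
      have hbot := hβ₀ β hβ
      rw [hbot] at hx
      simpa using hx
    subst hx0
    show ftm φ r (0 : M) ∈ ((⊥ : AddSubgroup (FrobMod R φ M)) : Set _)
    rw [ftm_zero_right]
    simp
  simpa using hle hz

end FrobGrading3

section Ideals

open DirectSum

variable {K R : Type*} [Field K] [CommRing R] [Algebra K R]
  (𝒜 : ℕ → Submodule K R) [GradedAlgebra 𝒜]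

lemma A1_le_irrelevant (x : R) (hx : x ∈ 𝒜 1) :
    x ∈ (HomogeneousIdeal.irrelevant 𝒜).toIdeal := by
  have : x ∈ HomogeneousIdeal.irrelevant 𝒜 := by
    rw [HomogeneousIdeal.mem_irrelevant_iff, GradedRing.proj_apply]
    rw [DirectSum.decompose_of_mem_ne 𝒜 hx one_ne_zero]
  exact this

lemma A_le_pow_irrelevant (hstd1 : ∀ n : ℕ, 𝒜 (n + 1) = 𝒜 1 * 𝒜 n) :
    ∀ k : ℕ, ∀ x ∈ 𝒜 (k + 1), x ∈ (HomogeneousIdeal.irrelevant 𝒜).toIdeal ^ (k + 1) := by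
  intro k
  induction k with
  | zero => intro x hx; rw [pow_one]; exact A1_le_irrelevant 𝒜 x hx
  | succ k ih =>
    intro x hx
    rw [hstd1 (k + 1)] at hx
    refine Submodule.mul_induction_on hx ?_ ?_
    · intro a ha b hb
      have h := Ideal.mul_mem_mul (A1_le_irrelevant 𝒜 a ha) (ih b hb)
      rwa [← pow_succ'] at h
    · intro y z hy hz
      exact Ideal.add_mem _ hy hz

lemma A_succ_le_span1 (hstd1 : ∀ n : ℕ, 𝒜 (n + 1) = 𝒜 1 * 𝒜 n) :
    ∀ k : ℕ, ∀ x ∈ 𝒜 (k + 1), x ∈ Ideal.span ((𝒜 1 : Submodule K R) : Set R) := by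
  intro k
  induction k with
  | zero => intro x hx; exact Ideal.subset_span hx
  | succ k ih =>
    intro x hx
    rw [hstd1 (k + 1)] at hx
    refine Submodule.mul_induction_on hx ?_ ?_
    · intro a ha b hb
      rw [show a * b = b * a from mul_comm a b]
      exact Ideal.mul_mem_left _ b (Ideal.subset_span ha)
    · intro y z hy hz
      exact Ideal.add_mem _ hy hz

lemma irrelevant_le_span1 (hstd1 : ∀ n : ℕ, 𝒜 (n + 1) = 𝒜 1 * 𝒜 n) :
    (HomogeneousIdeal.irrelevant 𝒜).toIdeal ≤ Ideal.span ((𝒜 1 : Submodule K R) : Set R) := by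
  classical
  intro x hx
  have h0 : (DirectSum.decompose 𝒜 x 0 : R) = 0 := by
    have hmem : x ∈ HomogeneousIdeal.irrelevant 𝒜 := hx
    rw [HomogeneousIdeal.mem_irrelevant_iff, GradedRing.proj_apply] at hmem
    exact hmem
  have hsum := DirectSum.sum_support_decompose 𝒜 x
  rw [← hsum]
  refine Ideal.sum_mem _ fun i _ => ?_
  match i with
  | 0 => rw [h0]; exact zero_mem _
  | (k + 1) => exact A_succ_le_span1 𝒜 hstd1 k _ (SetLike.coe_mem _)

lemma pow_irrelevant_le_span (hstd1 : ∀ n : ℕ, 𝒜 (n + 1) = 𝒜 1 * 𝒜 n) :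
    ∀ k : ℕ, (HomogeneousIdeal.irrelevant 𝒜).toIdeal ^ (k + 1) ≤
      Ideal.span ((𝒜 (k + 1) : Submodule K R) : Set R) := by
  intro k
  induction k with
  | zero => rw [pow_one]; exact irrelevant_le_span1 𝒜 hstd1
  | succ k ih =>
    rw [pow_succ]
    refine le_trans (Ideal.mul_mono ih (irrelevant_le_span1 𝒜 hstd1)) ?_
    rw [Ideal.span_mul_span']
    refine Ideal.span_mono ?_
    rintro y ⟨a, ha, b, hb, rfl⟩
    exact SetLike.mul_mem_graded ha hb

end Ideals

section H0Lemmas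

lemma mem_H0_iff {R M₂ : Type*} [CommRing R] (I : Ideal R) [AddCommGroup M₂] [Module R M₂]
    (z : M₂) : z ∈ H0 I M₂ ↔ ∃ k : ℕ, ∀ g ∈ I ^ k, g • z = 0 := by
  unfold H0
  constructor
  · intro h
    have hdir : Directed (· ≤ ·)
        (fun k : ℕ => Submodule.torsionBySet R M₂ ((I ^ k : Ideal R) : Set R)) := by
      refine Monotone.directed_le fun k l hkl => ?_
      exact Submodule.torsionBySet_le_torsionBySet_of_subset
        (fun x hx => Ideal.pow_le_pow_right hkl hx)
    obtain ⟨k, hk⟩ := (Submodule.mem_iSup_of_directed _ hdir).mp h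
    exact ⟨k, fun g hg => (Submodule.mem_torsionBySet_iff _ _).mp hk ⟨g, hg⟩⟩
  · rintro ⟨k, hk⟩
    exact le_iSup (fun k : ℕ => Submodule.torsionBySet R M₂ ((I ^ k : Ideal R) : Set R)) k
      ((Submodule.mem_torsionBySet_iff _ _).mpr fun g => hk g g.2)

lemma span_smul_eq_zero {R M₂ : Type*} [CommRing R] [AddCommGroup M₂] [Module R M₂]
    (s : Set R) (w : M₂) (hw : ∀ h ∈ s, h • w = 0) :
    ∀ g ∈ Ideal.span s, g • w = 0 := by
  intro g hg
  have hle : Ideal.span s ≤ LinearMap.ker (LinearMap.toSpanSingleton R M₂ w) := by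
    rw [Ideal.span_le]
    intro h hh
    simp only [SetLike.mem_coe, LinearMap.mem_ker, LinearMap.toSpanSingleton_apply]
    exact hw h hh
  have hker := hle hg
  simpa [LinearMap.toSpanSingleton_apply] using hker

end H0Lemmas

section LowerBound

open DirectSum

lemma exists_degree_lower_bound {K R : Type*} [Field K] [CommRing R] [Algebra K R]
    (𝒜 : ℕ → Submodule K R) [GradedAlgebra 𝒜]
    {M : Type*} [AddCommGroup M] [Module R M] [Module K M] [IsScalarTower K R M]
    [Module.Finite R M]
    (ℳ : ℤ → Submodule K M) [DirectSum.Decomposition ℳ]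
    (hgsmul : ∀ (i : ℕ) (j : ℤ) (r : R) (x : M), r ∈ 𝒜 i → x ∈ ℳ j → r • x ∈ ℳ (i + j)) :
    ∃ β₀ : ℤ, ∀ β < β₀, ℳ β = ⊥ := by
  classical
  obtain ⟨S, hS⟩ := Module.Finite.fg_top (R := R) (M := M)
  set U : Set ℤ := ⋃ x ∈ (S : Set M), {β : ℤ | (DirectSum.decompose ℳ x β : M) ≠ 0} with hU
  have hUfin : U.Finite := by
    refine Set.Finite.biUnion S.finite_toSet fun x _ => ?_
    have hsub : {β : ℤ | (DirectSum.decompose ℳ x β : M) ≠ 0}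
        ⊆ ↑(DirectSum.decompose ℳ x).support := by
      intro β hβ
      exact DFinsupp.mem_support_iff.mpr (fun h0 => hβ (by rw [h0]; rfl))
    exact Set.Finite.subset (Finset.finite_toSet _) hsub
  obtain ⟨β₁, hβ₁⟩ := hUfin.bddBelow
  refine ⟨β₁, fun β hβ => ?_⟩
  have hsm : ∀ (i : ℕ) (ρ : R), ρ ∈ 𝒜 i → ∀ (y : M) (γ : ℤ),
      (DirectSum.decompose ℳ (ρ • y) γ : M)
        = ρ • (DirectSum.decompose ℳ y (γ - (i : ℤ)) : M) := by
    intro i ρ hρ y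
    refine DirectSum.Decomposition.inductionOn ℳ
      (motive := fun y => ∀ γ : ℤ, (DirectSum.decompose ℳ (ρ • y) γ : M)
        = ρ • (DirectSum.decompose ℳ y (γ - (i : ℤ)) : M)) ?_ ?_ ?_ y
    · intro γ
      beta_reduce
      rw [smul_zero, DirectSum.decompose_zero]
      simp
    · rintro δ ⟨v, hv⟩ γ
      beta_reduce
      have hv' : ρ • v ∈ ℳ ((i : ℤ) + δ) := hgsmul i δ ρ v hρ hv
      by_cases hγ : γ = (i : ℤ) + δ
      · subst hγ
        rw [DirectSum.decompose_of_mem_same ℳ hv']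
        have he : (i : ℤ) + δ - (i : ℤ) = δ := by ring
        rw [he, DirectSum.decompose_of_mem_same ℳ hv]
      · rw [DirectSum.decompose_of_mem_ne ℳ hv' (fun hE => hγ hE.symm)]
        have hne : δ ≠ γ - (i : ℤ) := fun hE => hγ (by omega)
        rw [DirectSum.decompose_of_mem_ne ℳ hv hne, smul_zero]
    · intro y y' hy hy' γ
      beta_reduce at hy hy' ⊢
      rw [smul_add, DirectSum.decompose_add, DirectSum.add_apply, Submodule.coe_add, hy γ, hy' γ,
        DirectSum.decompose_add, DirectSum.add_apply, Submodule.coe_add, smul_add]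
  let V : Submodule R M :=
    { carrier := {x : M | ∀ γ : ℤ, γ < β₁ → (DirectSum.decompose ℳ x γ : M) = 0}
      add_mem' := by
        intro x y hx hy γ hγ
        rw [DirectSum.decompose_add, DirectSum.add_apply, Submodule.coe_add, hx γ hγ, hy γ hγ,
          add_zero]
      zero_mem' := by
        intro γ hγ
        rw [DirectSum.decompose_zero]
        simp
      smul_mem' := by
        intro r x hx
        refine DirectSum.Decomposition.inductionOn 𝒜
          (motive := fun r => ∀ γ : ℤ, γ < β₁ → (DirectSum.decompose ℳ (r • x) γ : M) = 0) ?_ ?_ ?_ r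
        · intro γ hγ
          beta_reduce
          rw [zero_smul, DirectSum.decompose_zero]
          simp
        · rintro i ⟨ρ, hρ⟩ γ hγ
          beta_reduce
          rw [hsm i ρ hρ x γ]
          have hlt : γ - (i : ℤ) < β₁ := by
            have := Int.natCast_nonneg i
            omega
          rw [hx (γ - (i : ℤ)) hlt, smul_zero]
        · intro r r' h h' γ hγ
          beta_reduce at h h' ⊢
          rw [add_smul, DirectSum.decompose_add, DirectSum.add_apply, Submodule.coe_add,
            h γ hγ, h' γ hγ, add_zero] }
  have hVtop : ∀ x : M, x ∈ V := by
    have hle : (⊤ : Submodule R M) ≤ V := by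
      rw [← hS]
      refine Submodule.span_le.mpr ?_
      intro s hs
      show ∀ γ : ℤ, γ < β₁ → (DirectSum.decompose ℳ s γ : M) = 0
      intro γ hγ
      by_contra hne
      have hmemU : γ ∈ U := Set.mem_biUnion hs hne
      exact absurd (hβ₁ hmemU) (not_le.mpr hγ)
    exact fun x => hle trivial
  rw [eq_bot_iff]
  intro v hv
  have h : (DirectSum.decompose ℳ v β : M) = 0 := hVtop v β hβ
  rw [DirectSum.decompose_of_mem_same ℳ hv] at h
  simpa using h

end LowerBound

open TensorProduct in
/-- Lemma 4.3: if `end(H⁰_m(Fⁿ(M))) ≤ aq + c` for constants `a`, `c` not depending on `q = pⁿ`,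
then `M` satisfies the (LC) property: `m^{bq}·H⁰_m(Fⁿ(M)) = 0` for some `b` independent of `q`.
The grading of `Fⁿ(M)` is the one induced from a graded presentation of `M`: the homogeneous
component of degree `t` is generated by the tensors `r ⊗ x` with `r ∈ 𝒜_α`, `x ∈ ℳ_β` and
`α + qβ = t`. -/
theorem lc_of_linear_bound_on_end
    {K R : Type*} [Field K] [CommRing R] [Algebra K R] [IsNoetherianRing R]
    (p : ℕ) [Fact p.Prime] [CharP R p]
    (𝒜 : ℕ → Submodule K R) [GradedAlgebra 𝒜] (hstd : IsStandardGraded 𝒜)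
    (M : Type*) [AddCommGroup M] [Module R M] [Module K M] [IsScalarTower K R M]
    [Module.Finite R M]
    (ℳ : ℤ → Submodule K M) (hdecomp : DirectSum.IsInternal ℳ)
    (hgsmul : ∀ (i : ℕ) (j : ℤ) (r : R) (x : M), r ∈ 𝒜 i → x ∈ ℳ j → r • x ∈ ℳ (i + j))
    (a c : ℤ)
    (hend : ∀ n : ℕ, ∀ t : ℤ, a * (p ^ n : ℤ) + c < t →
      ∀ z ∈ AddSubgroup.closure
        {z : FrobMod R (iterateFrobenius R p n) M |
          ∃ (α : ℕ) (β : ℤ) (r : R) (x : M), r ∈ 𝒜 α ∧ x ∈ ℳ β ∧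
            (α : ℤ) + (p ^ n : ℤ) * β = t ∧
            z = (FrobAlg.of R (iterateFrobenius R p n) r) ⊗ₜ[R] x},
        z ∈ H0 ((HomogeneousIdeal.irrelevant 𝒜).toIdeal)
              (FrobMod R (iterateFrobenius R p n) M) → z = 0) :
    ∃ b : ℕ, ∀ n : ℕ,
      ((HomogeneousIdeal.irrelevant 𝒜).toIdeal ^ (b * p ^ n)) •
        H0 ((HomogeneousIdeal.irrelevant 𝒜).toIdeal)
          (FrobMod R (iterateFrobenius R p n) M) = ⊥ := by
  classical
  obtain ⟨hstd0, hstd1⟩ := hstd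
  letI : DirectSum.Decomposition ℳ := hdecomp.chooseDecomposition
  obtain ⟨β₀, hβ₀⟩ := exists_degree_lower_bound 𝒜 ℳ hgsmul
  refine ⟨(a + 1 + max c 0 - β₀).toNat + 1, fun n => ?_⟩
  set b : ℕ := (a + 1 + max c 0 - β₀).toNat + 1 with hbdef
  set I : Ideal R := (HomogeneousIdeal.irrelevant 𝒜).toIdeal with hIdef
  set q : ℤ := (p ^ n : ℤ) with hqdef
  set φn : R →+* R := iterateFrobenius R p n with hφn
  have hppos : 0 < p := (Fact.out (p := p.Prime)).pos
  have hq0 : (0 : ℤ) < q := by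
    rw [hqdef]
    positivity
  have hq1 : (1 : ℤ) ≤ q := hq0
  -- the balance hypothesis and the decomposition map Φ
  have hφmem : ∀ (i : ℕ) (r : R), r ∈ 𝒜 i → φn r ∈ 𝒜 (p ^ n * i) := by
    intro i r hr
    have hpow := SetLike.pow_mem_graded (p ^ n) hr
    rw [smul_eq_mul] at hpow
    have hfr : φn r = r ^ p ^ n := by rw [hφn, iterateFrobenius_def]
    rwa [hfr]
  have hbal := fAux_balance 𝒜 φn ℳ q hgsmul (p ^ n)
    (by rw [hqdef]; push_cast; ring) hφmem
  -- main claim: homogeneous elements of degree b * p ^ n kill H0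
  have hclaim : ∀ g' ∈ 𝒜 (b * p ^ n), ∀ z ∈ H0 I (FrobMod R φn M), g' • z = 0 := by
    intro g' hg' z hz
    -- components of z lie in H0
    have hcomp : ∀ t : ℤ, PhiAux 𝒜 φn ℳ q hbal z t ∈ H0 I (FrobMod R φn M) := by
      intro t
      obtain ⟨k, hk⟩ := (mem_H0_iff I z).mp hz
      have hk1 : ∀ gg ∈ I ^ (k + 1), gg • z = 0 := fun gg hgg =>
        hk gg (Ideal.pow_le_pow_right (Nat.le_succ k) hgg)
      rw [mem_H0_iff]
      refine ⟨k + 1, ?_⟩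
      have hkill : ∀ h ∈ 𝒜 (k + 1), h • (PhiAux 𝒜 φn ℳ q hbal z t) = 0 := by
        intro h hh
        have hz0 : h • z = 0 := hk1 h (A_le_pow_irrelevant 𝒜 hstd1 k h hh)
        have hsh := PhiAux_shift 𝒜 φn ℳ q hbal (k + 1) h hh z (t + ((k + 1 : ℕ) : ℤ))
        rw [hz0, map_zero, DirectSum.zero_apply] at hsh
        rw [show (t + ((k + 1 : ℕ) : ℤ)) - ((k + 1 : ℕ) : ℤ) = t by ring] at hsh
        exact hsh.symm
      intro gg hgg
      exact span_smul_eq_zero _ _ hkill gg (pow_irrelevant_le_span 𝒜 hstd1 k hgg)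
    -- all components of g' • z vanish
    have hΦ0 : PhiAux 𝒜 φn ℳ q hbal (g' • z) = 0 := by
      refine DFinsupp.ext fun t => ?_
      rw [DirectSum.zero_apply, PhiAux_shift 𝒜 φn ℳ q hbal (b * p ^ n) g' hg' z t]
      by_cases hcase : t - ((b * p ^ n : ℕ) : ℤ) < q * β₀
      · rw [NN_eq_zero_of_lt 𝒜 φn ℳ q β₀ hβ₀ hq0 _ hcase _
          (PhiAux_component_mem 𝒜 φn ℳ q hbal z _), smul_zero]
      · push_neg at hcase
        have hmem : g' • (PhiAux 𝒜 φn ℳ q hbal z (t - ((b * p ^ n : ℕ) : ℤ)))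
            ∈ NN 𝒜 φn ℳ q ((t - ((b * p ^ n : ℕ) : ℤ)) + ((b * p ^ n : ℕ) : ℤ)) :=
          NN_smul 𝒜 φn ℳ q (b * p ^ n) g' hg' _ _
            (PhiAux_component_mem 𝒜 φn ℳ q hbal z _)
        have hH0' : g' • (PhiAux 𝒜 φn ℳ q hbal z (t - ((b * p ^ n : ℕ) : ℤ)))
            ∈ H0 I (FrobMod R φn M) := Submodule.smul_mem _ g' (hcomp _)
        have hcast : ((b * p ^ n : ℕ) : ℤ) = (b : ℤ) * q := by
          rw [hqdef]; push_cast; ring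
        have hble : a + max c 0 + 2 - β₀ ≤ (b : ℤ) := by
          rw [hbdef]
          push_cast
          have hto := Int.self_le_toNat (a + 1 + max c 0 - β₀)
          linarith
        have hbig : a * q + c <
            (t - ((b * p ^ n : ℕ) : ℤ)) + ((b * p ^ n : ℕ) : ℤ) := by
          set s : ℤ := t - ((b * p ^ n : ℕ) : ℤ) with hsdef
          have h2 : a + max c 0 + 2 ≤ β₀ + (b : ℤ) := by linarith
          have h3 := mul_le_mul_of_nonneg_left h2 hq0.le
          have h4 : (max c 0 + 2 : ℤ) ≤ q * (max c 0 + 2) := by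
            have hmx : (0 : ℤ) ≤ max c 0 := le_max_right c 0
            have hprod := mul_nonneg (by linarith : (0 : ℤ) ≤ q - 1)
              (by linarith : (0 : ℤ) ≤ max c 0 + 2)
            nlinarith [hprod]
          have h5 : c ≤ max c 0 := le_max_left c 0
          rw [hcast]
          nlinarith [hcase, h3, h4, h5]
        exact hend n _ hbig _ hmem hH0'
    have hsig := PhiAux_sigma 𝒜 φn ℳ q hbal (g' • z)
    rw [hΦ0, map_zero] at hsig
    exact hsig.symm
  -- conclude via the span description of powers of the irrelevant ideal
  rw [eq_bot_iff]
  refine Submodule.smul_le.mpr fun g hg z hz => ?_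
  rw [Submodule.mem_bot]
  have hbp : 0 < b * p ^ n := Nat.mul_pos (Nat.succ_pos _) (pow_pos hppos n)
  obtain ⟨k₀, hk₀⟩ : ∃ k₀, b * p ^ n = k₀ + 1 := ⟨b * p ^ n - 1, by omega⟩
  have hgspan : g ∈ Ideal.span ((𝒜 (b * p ^ n) : Submodule K R) : Set R) := by
    rw [hk₀] at hg ⊢
    exact pow_irrelevant_le_span 𝒜 hstd1 k₀ hg
  exact span_smul_eq_zero _ z (fun h hh => hclaim h hh z hz) g hgspan
end

section
/- Let R be a standard graded ring of finite F-representation type over an F-finite field R₀ of prime characteristic p, and let I ⊆ R be a homogeneous ideal. Then there exists b ∈ ℕ₀, independent of q, such that m^{bq}·H⁰_m(R/I^[q]) = 0 for all q = pⁿ; i.e., I satisfies the (LC) property. -/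
set_option maxHeartbeats 1000000


/-! ### Auxiliary lemmas -/

/-- The identity map of `R`, viewed as coming from `FrobAlg R φ`. -/
def FrobAlg.toR {R : Type*} [CommRing R] {φ : R →+* R} : FrobAlg R φ → R := id

lemma H0_mono {R M : Type*} [CommRing R] [AddCommGroup M] [Module R M] (J : Ideal R) :
    Monotone (fun k : ℕ => Submodule.torsionBySet R M ((J ^ k : Ideal R) : Set R)) := by
  intro k l hkl x hx
  rw [Submodule.mem_torsionBySet_iff] at hx ⊢
  rintro ⟨a, ha⟩
  exact hx ⟨a, Ideal.pow_le_pow_right hkl ha⟩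

lemma H0_killed {R M : Type*} [CommRing R] [AddCommGroup M] [Module R M] [IsNoetherian R M]
    (J : Ideal R) : ∃ c : ℕ, ∀ x ∈ H0 J M, ∀ r ∈ J ^ c, r • x = 0 := by
  obtain ⟨c, hc⟩ := monotone_stabilizes_iff_noetherian.mpr inferInstance ⟨_, H0_mono (M := M) J⟩
  refine ⟨c, fun x hx r hr => ?_⟩
  have hH0 : H0 J M ≤ Submodule.torsionBySet R M ((J ^ c : Ideal R) : Set R) := by
    refine iSup_le fun k => ?_
    exact le_trans (H0_mono J (le_max_left k c)) (le_of_eq (hc _ (le_max_right k c)).symm)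
  exact (Submodule.mem_torsionBySet_iff _ _).mp (hH0 hx) ⟨r, hr⟩

lemma pow_card_mul_le_span_pow {R : Type*} [CommRing R] (T : Finset R) (h0 : (0 : R) ∈ T)
    (q : ℕ) (hq : 1 ≤ q) :
    Ideal.span (T : Set R) ^ (T.card * q) ≤ Ideal.span ((fun x => x ^ q) '' (T : Set R)) := by
  rw [Ideal.span, Submodule.span_pow]
  refine Submodule.span_le.mpr ?_
  classical
  rintro z hz
  rw [Set.mem_pow] at hz
  obtain ⟨f, hf⟩ := hz
  obtain ⟨y, hyT, hcard⟩ := Finset.exists_le_card_fiber_of_mul_le_card_of_maps_to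
    (s := (Finset.univ : Finset (Fin (T.card * q)))) (f := fun i => (f i : R)) (t := T) (n := q)
    (fun i _ => (f i).2) ⟨0, h0⟩ (by simp)
  have hprod : z = ∏ i : Fin (T.card * q), (f i : R) := by
    rw [← hf, List.prod_ofFn]
  rw [hprod, ← Finset.prod_filter_mul_prod_filter_not Finset.univ (fun i => (f i : R) = y)]
  have h1 : ∏ i ∈ Finset.univ.filter (fun i => (f i : R) = y), (f i : R)
      = y ^ (Finset.univ.filter (fun i => (f i : R) = y)).card := by
    rw [Finset.prod_congr rfl (fun i hi => (Finset.mem_filter.mp hi).2), Finset.prod_const]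
  rw [h1]
  set k := (Finset.univ.filter (fun i => (f i : R) = y)).card with hk
  have : y ^ k = y ^ q * y ^ (k - q) := by
    rw [← pow_add, Nat.add_sub_cancel' hcard]
  rw [this, mul_assoc]
  exact Ideal.mul_mem_right _ _ (Ideal.subset_span ⟨y, hyT, rfl⟩)

open Pointwise in
lemma span_pow_image_pow_le {R : Type*} [CommRing R] (J : Ideal R) (q : ℕ) (c : ℕ) :
    (Ideal.span ((fun x => x ^ q) '' (J : Set R))) ^ c
      ≤ Ideal.span ((fun x => x ^ q) '' ((J ^ c : Ideal R) : Set R)) := by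
  induction c with
  | zero =>
    rw [pow_zero, pow_zero, Ideal.one_eq_top]
    exact top_le_iff.mpr ((Ideal.eq_top_iff_one _).mpr
      (Ideal.subset_span ⟨1, Submodule.mem_top, one_pow q⟩))
  | succ c ih =>
    rw [pow_succ, pow_succ]
    calc (Ideal.span ((fun x => x ^ q) '' (J : Set R))) ^ c
          * Ideal.span ((fun x => x ^ q) '' (J : Set R))
        ≤ Ideal.span ((fun x => x ^ q) '' ((J ^ c : Ideal R) : Set R))
          * Ideal.span ((fun x => x ^ q) '' (J : Set R)) := Ideal.mul_mono ih le_rfl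
      _ = Ideal.span (((fun x => x ^ q) '' ((J ^ c : Ideal R) : Set R))
          * ((fun x => x ^ q) '' (J : Set R))) := Ideal.span_mul_span' _ _
      _ ≤ Ideal.span ((fun x => x ^ q) '' ((J ^ c * J : Ideal R) : Set R)) := by
          refine Ideal.span_mono ?_
          rw [Set.mul_subset_iff]
          rintro _ ⟨x, hx, rfl⟩ _ ⟨y, hy, rfl⟩
          exact ⟨x * y, Ideal.mul_mem_mul hx hy, mul_pow x y q⟩

lemma FrobAlg.mem_smul_top_iff {R : Type*} [CommRing R] (φ : R →+* R) (I : Ideal R)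
    (z : R) :
    FrobAlg.of R φ z ∈ I • (⊤ : Submodule R (FrobAlg R φ)) ↔
      z ∈ Ideal.span (φ '' (I : Set R)) := by
  constructor
  · intro hz
    refine Submodule.smul_induction_on
      (p := fun w : FrobAlg R φ => FrobAlg.toR w ∈ Ideal.span (φ '' (I : Set R)))
      hz (fun r hr w _ => ?_) (fun a b ha hb => add_mem ha hb)
    exact Ideal.mul_mem_right _ _ (Ideal.subset_span ⟨r, hr, rfl⟩)
  · intro hz
    let S : Submodule R R :=
      { carrier := {w : R | FrobAlg.of R φ w ∈ I • (⊤ : Submodule R (FrobAlg R φ))}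
        add_mem' := by
          intro x y hx hy
          show FrobAlg.of R φ (x + y) ∈ I • (⊤ : Submodule R (FrobAlg R φ))
          exact add_mem hx hy
        zero_mem' := by
          show FrobAlg.of R φ 0 ∈ I • (⊤ : Submodule R (FrobAlg R φ))
          exact zero_mem _
        smul_mem' := by
          intro a w hw
          simp only [Set.mem_setOf_eq] at hw ⊢
          show FrobAlg.of R φ (a * w) ∈ I • (⊤ : Submodule R (FrobAlg R φ))
          refine Submodule.smul_induction_on
            (p := fun u : FrobAlg R φ =>
              FrobAlg.of R φ (a * FrobAlg.toR u) ∈ I • (⊤ : Submodule R (FrobAlg R φ)))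
            hw (fun r hr v _ => ?_) (fun u v hu' hv' => ?_)
          · have h1 : FrobAlg.of R φ (a * FrobAlg.toR (r • v))
                = r • FrobAlg.of R φ (a * FrobAlg.toR v) := by
              show a * (φ r * FrobAlg.toR v) = φ r * (a * FrobAlg.toR v)
              ring
            show FrobAlg.of R φ (a * FrobAlg.toR (r • v)) ∈ I • (⊤ : Submodule R (FrobAlg R φ))
            rw [h1]
            exact Submodule.smul_mem_smul hr Submodule.mem_top
          · have h2 : a * FrobAlg.toR (u + v) = a * FrobAlg.toR u + a * FrobAlg.toR v :=
              mul_add a (FrobAlg.toR u) (FrobAlg.toR v)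
            show FrobAlg.of R φ (a * FrobAlg.toR (u + v)) ∈ I • (⊤ : Submodule R (FrobAlg R φ))
            rw [h2]
            exact add_mem hu' hv' }
    have hle : Ideal.span (φ '' (I : Set R)) ≤ S := by
      rw [Ideal.span_le]
      rintro w ⟨a, ha, rfl⟩
      show FrobAlg.of R φ (φ a) ∈ I • (⊤ : Submodule R (FrobAlg R φ))
      have h1 : (a • (1 : FrobAlg R φ) : FrobAlg R φ) = FrobAlg.of R φ (φ a) := mul_one (φ a)
      rw [← h1]
      exact Submodule.smul_mem_smul ha Submodule.mem_top
    exact hle hz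

open DirectSum in
lemma directSum_mem_smul_top_iff {R : Type*} [CommRing R] {ι : Type*} [DecidableEq ι]
    (M : ι → Type*) [∀ i, AddCommGroup (M i)] [∀ i, Module R (M i)] (I : Ideal R)
    (v : ⨁ i, M i) :
    v ∈ I • (⊤ : Submodule R (⨁ i, M i)) ↔ ∀ i, v i ∈ I • (⊤ : Submodule R (M i)) := by
  classical
  constructor
  · intro hv i
    have h1 : (DirectSum.component R ι M i) v ∈
        (I • (⊤ : Submodule R (⨁ i, M i))).map (DirectSum.component R ι M i) :=
      Submodule.mem_map_of_mem hv
    rw [Submodule.map_smul''] at h1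
    exact (show I • _ ≤ I • (⊤ : Submodule R (M i)) from smul_mono_right _ le_top) h1
  · intro hv
    rw [← DirectSum.sum_support_of v]
    refine Submodule.sum_mem _ fun i _ => ?_
    rw [← DirectSum.lof_eq_of R]
    have h1 : DirectSum.lof R ι M i (v i) ∈
        (I • (⊤ : Submodule R (M i))).map (DirectSum.lof R ι M i) :=
      Submodule.mem_map_of_mem (hv i)
    rw [Submodule.map_smul''] at h1
    exact (show I • _ ≤ I • (⊤ : Submodule R (⨁ i, M i)) from smul_mono_right _ le_top) h1

open DirectSum in
/-- Discussion 4.7(iii): let `R` be a standard graded ring of finite F-representation type over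
an F-finite field `K` of prime characteristic `p`.  That is: there are finitely generated
(ℚ-graded) modules `M₁, …, M_s` such that for every `q = pⁿ` the module `Fⁿ(R)` (which is `R`
viewed as an `R`-module via the `n`-th Frobenius, with its `1/q`-rescaled grading) decomposes,
as a graded module, as a finite direct sum of shifts `Mᵢ(ℓ)` with all occurring shifts bounded
below.  Then every homogeneous ideal `I` satisfies the (LC) property. -/
theorem lc_of_finite_F_representation_type
    {K R : Type*} [Field K] [CommRing R] [Algebra K R] [IsNoetherianRing R]
    (p : ℕ) [Fact p.Prime] [CharP K p] [CharP R p]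
    -- the base field is F-finite:
    (hFfin : Module.Finite K (FrobAlg K (frobenius K p)))
    (𝒜 : ℕ → Submodule K R) [GradedAlgebra 𝒜] (hstd : IsStandardGraded 𝒜)
    -- finite F-representation type:
    (s : ℕ) (Mod : Fin s → Type*)
    [∀ i, AddCommGroup (Mod i)] [∀ i, Module R (Mod i)] [∀ i, Module.Finite R (Mod i)]
    (ℳ : ∀ i, ℚ → AddSubgroup (Mod i))
    (hinternal : ∀ i, DirectSum.IsInternal (ℳ i))
    (hgsmul : ∀ (i : Fin s) (d : ℕ) (e : ℚ) (r : R) (x : Mod i),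
      r ∈ 𝒜 d → x ∈ ℳ i e → r • x ∈ ℳ i ((d : ℚ) + e))
    (C : ℚ)
    (hffrt : ∀ n : ℕ, ∃ (t : ℕ) (idx : Fin t → Fin s) (ℓ : Fin t → ℚ),
      (∀ j, C ≤ ℓ j) ∧
      ∃ e : FrobAlg R (iterateFrobenius R p n) ≃ₗ[R] (⨁ j : Fin t, Mod (idx j)),
        ∀ (d : ℕ) (r : R), r ∈ 𝒜 d → ∀ j : Fin t,
          (e (FrobAlg.of R (iterateFrobenius R p n) r)) j ∈
            ℳ (idx j) ((d : ℚ) / ((p : ℚ) ^ n) + ℓ j))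
    (I : Ideal R) (hI : I.IsHomogeneous 𝒜) :
    ∃ b : ℕ, ∀ n : ℕ,
      ((HomogeneousIdeal.irrelevant 𝒜).toIdeal ^ (b * p ^ n)) •
        H0 ((HomogeneousIdeal.irrelevant 𝒜).toIdeal) (R ⧸ I.frobPow (p ^ n)) = ⊥ := by
  classical
  set m : Ideal R := (HomogeneousIdeal.irrelevant 𝒜).toIdeal with hmdef
  obtain ⟨T, hT⟩ := IsNoetherian.noetherian m
  set T' : Finset R := insert (0 : R) T with hT'def
  have hT'span : Ideal.span ((T' : Finset R) : Set R) = m := by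
    rw [hT'def, Finset.coe_insert]
    show Submodule.span R (insert 0 ((T : Finset R) : Set R)) = m
    rw [Submodule.span_insert_zero]
    exact hT
  have hT'sub : ((T' : Finset R) : Set R) ⊆ (m : Set R) := by
    rw [← hT'span]
    exact Ideal.subset_span
  choose cf hcf using fun i : Fin s =>
    H0_killed (M := Mod i ⧸ (I • ⊤ : Submodule R (Mod i))) m
  set c : ℕ := Finset.univ.sup cf with hcdef
  have hkill : ∀ (i : Fin s) (x : Mod i ⧸ (I • ⊤ : Submodule R (Mod i))),
      x ∈ H0 m (Mod i ⧸ (I • ⊤ : Submodule R (Mod i))) →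
      ∀ r ∈ m ^ c, r • x = 0 := fun i x hx r hr =>
    hcf i x hx r (Ideal.pow_le_pow_right (Finset.le_sup (Finset.mem_univ i)) hr)
  refine ⟨T'.card * c, fun n => ?_⟩
  have hq1 : 1 ≤ p ^ n := Nat.one_le_pow _ _ (Fact.out (p := p.Prime)).pos
  obtain ⟨t, idx, ℓ, -, e, -⟩ := hffrt n
  have himg : ⇑(iterateFrobenius R p n) '' (I : Set R)
      = (fun x : R => x ^ p ^ n) '' (I : Set R) := by
    exact Set.image_congr' (fun x => iterateFrobenius_def p n x)
  have hIspan : Ideal.span (⇑(iterateFrobenius R p n) '' (I : Set R)) = I.frobPow (p ^ n) := by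
    unfold Ideal.frobPow
    rw [himg]
  have hmap : Submodule.map e.toLinearMap
      (I • (⊤ : Submodule R (FrobAlg R (iterateFrobenius R p n))))
      = I • (⊤ : Submodule R (⨁ j : Fin t, Mod (idx j))) := by
    rw [Submodule.map_smul'', Submodule.map_top, LinearEquiv.range]
  have hker : ∀ z : R, z ∈ I.frobPow (p ^ n) ↔
      ∀ j, (e (FrobAlg.of R (iterateFrobenius R p n) z)) j
        ∈ (I • ⊤ : Submodule R (Mod (idx j))) := by
    intro z
    rw [← hIspan, ← FrobAlg.mem_smul_top_iff, ← directSum_mem_smul_top_iff, ← hmap]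
    constructor
    · intro h
      exact Submodule.mem_map_of_mem h
    · rintro ⟨w, hw, hwe⟩
      rwa [← e.injective hwe]
  rw [eq_bot_iff]
  refine Submodule.smul_le.mpr fun r hr x hx => ?_
  obtain ⟨y, rfl⟩ := Submodule.Quotient.mk_surjective _ x
  rw [Submodule.mem_bot]
  unfold H0 at hx
  obtain ⟨k, hk⟩ := (Submodule.mem_iSup_of_directed _
    (H0_mono (M := R ⧸ I.frobPow (p ^ n)) m).directed_le).mp hx
  rw [Submodule.mem_torsionBySet_iff] at hk
  have key1 : ∀ j : Fin t,
      (Submodule.Quotient.mk ((e (FrobAlg.of R (iterateFrobenius R p n) y)) j) :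
        Mod (idx j) ⧸ (I • ⊤ : Submodule R (Mod (idx j)))) ∈
      H0 m (Mod (idx j) ⧸ (I • ⊤ : Submodule R (Mod (idx j)))) := by
    intro j
    unfold H0
    refine (le_iSup (fun k : ℕ =>
      Submodule.torsionBySet R _ (((m ^ k : Ideal R)) : Set R)) k) ?_
    rw [Submodule.mem_torsionBySet_iff]
    rintro ⟨a, ha⟩
    have h1 : a ^ p ^ n * y ∈ I.frobPow (p ^ n) := by
      have h2 : (a ^ p ^ n) • (Submodule.Quotient.mk y : R ⧸ I.frobPow (p ^ n)) = 0 :=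
        hk ⟨a ^ p ^ n, Ideal.pow_mem_of_mem _ ha _ (lt_of_lt_of_le one_pos hq1)⟩
      rwa [← Submodule.Quotient.mk_smul, Submodule.Quotient.mk_eq_zero, smul_eq_mul] at h2
    have h3 := (hker _).mp h1 j
    have h4 : FrobAlg.of R (iterateFrobenius R p n) (a ^ p ^ n * y)
        = a • FrobAlg.of R (iterateFrobenius R p n) y := rfl
    rw [h4, map_smul, DirectSum.smul_apply] at h3
    show a • (Submodule.Quotient.mk ((e (FrobAlg.of R (iterateFrobenius R p n) y)) j) :
        Mod (idx j) ⧸ (I • ⊤ : Submodule R (Mod (idx j)))) = 0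
    rw [← Submodule.Quotient.mk_smul, Submodule.Quotient.mk_eq_zero]
    exact h3
  have key2 : ∀ b' ∈ m ^ c, b' ^ p ^ n * y ∈ I.frobPow (p ^ n) := by
    intro b' hb'
    rw [hker]
    intro j
    have h0 := hkill (idx j) _ (key1 j) b' hb'
    rw [← Submodule.Quotient.mk_smul, Submodule.Quotient.mk_eq_zero] at h0
    have h4 : FrobAlg.of R (iterateFrobenius R p n) (b' ^ p ^ n * y)
        = b' • FrobAlg.of R (iterateFrobenius R p n) y := rfl
    rw [h4, map_smul, DirectSum.smul_apply]
    exact h0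
  have hr' : r ∈ Ideal.span ((fun x : R => x ^ p ^ n) '' ((m ^ c : Ideal R) : Set R)) := by
    refine span_pow_image_pow_le m (p ^ n) c ?_
    have h2 : m ^ (T'.card * p ^ n)
        ≤ Ideal.span ((fun x : R => x ^ p ^ n) '' (m : Set R)) := by
      calc m ^ (T'.card * p ^ n)
          = Ideal.span ((T' : Finset R) : Set R) ^ (T'.card * p ^ n) := by rw [hT'span]
        _ ≤ Ideal.span ((fun x : R => x ^ p ^ n) '' ((T' : Finset R) : Set R)) :=
            pow_card_mul_le_span_pow T' (Finset.mem_insert_self 0 T) (p ^ n) hq1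
        _ ≤ _ := Ideal.span_mono (Set.image_mono hT'sub)
    have e1 : T'.card * c * p ^ n = T'.card * p ^ n * c := by ring
    rw [e1, pow_mul] at hr
    exact Ideal.pow_right_mono h2 c hr
  have key3 : r * y ∈ I.frobPow (p ^ n) := by
    refine Submodule.span_induction (p := fun z _ => z * y ∈ I.frobPow (p ^ n))
      ?_ ?_ ?_ ?_ hr'
    · rintro z ⟨b', hb', rfl⟩
      exact key2 b' hb'
    · show (0 : R) * y ∈ I.frobPow (p ^ n)
      rw [zero_mul]
      exact zero_mem _
    · intro z w _ _ hz hw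
      show (z + w) * y ∈ I.frobPow (p ^ n)
      rw [add_mul]
      exact add_mem hz hw
    · intro a z _ hz
      show (a • z) * y ∈ I.frobPow (p ^ n)
      rw [smul_eq_mul, mul_assoc]
      exact Ideal.mul_mem_left _ _ hz
  show r • (Submodule.Quotient.mk y : R ⧸ I.frobPow (p ^ n)) = 0
  rw [← Submodule.Quotient.mk_smul, Submodule.Quotient.mk_eq_zero, smul_eq_mul]
  exact key3
end

section
/- Let R be a standard graded ring over a field of prime characteristic p and let M be a finitely generated graded R-module with dim M = 1. Then ⋃_{n∈ℕ} Ass_R(Fⁿ(M)) is a finite set; indeed it is contained in the (finite) union of the minimal primes of Supp(M) and the irrelevant maximal ideal m. -/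
set_option linter.unusedSectionVars false
set_option linter.unusedVariables false
set_option maxHeartbeats 1000000
set_option synthInstance.maxHeartbeats 400000


section Aux

variable {R : Type*} [CommRing R] (φ : R →+* R)
variable {M : Type*} [AddCommGroup M] [Module R M]

/-- pure tensor in FrobMod -/
noncomputable def ft (a : R) (x : M) : FrobMod R φ M :=
  TensorProduct.tmul R (FrobAlg.of R φ a) x

lemma ft_add_left (a b : R) (x : M) : ft φ (a + b) x = ft φ a x + ft φ b x :=
  TensorProduct.add_tmul _ _ _

lemma ft_add_right (a : R) (x y : M) : ft φ a (x + y) = ft φ a x + ft φ a y :=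
  TensorProduct.tmul_add _ _ _

lemma smul_ft (r a : R) (x : M) : r • ft φ a x = ft φ (r * a) x := by
  show (FrobAlg.of R φ r) • (TensorProduct.tmul R (FrobAlg.of R φ a) x)
      = TensorProduct.tmul R (FrobAlg.of R φ (r * a)) x
  rw [TensorProduct.smul_tmul']
  rfl

lemma ft_balance (r a : R) (x : M) : ft φ (φ r * a) x = ft φ a (r • x) := by
  have h : (FrobAlg.of R φ (φ r * a)) = r • (FrobAlg.of R φ a) := by
    rw [Algebra.smul_def]; rfl
  show TensorProduct.tmul R (FrobAlg.of R φ (φ r * a)) x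
      = TensorProduct.tmul R (FrobAlg.of R φ a) (r • x)
  rw [h, TensorProduct.smul_tmul]

lemma ft_zero_left (x : M) : ft φ 0 x = 0 := TensorProduct.zero_tmul _ _
lemma ft_zero_right (a : R) : ft φ a (0 : M) = 0 := TensorProduct.tmul_zero _ _

/-- `ft` as an AddMonoidHom in the second variable. -/
noncomputable def ftHom (a : R) : M →+ FrobMod R φ M :=
  AddMonoidHom.mk' (fun x => ft φ a x) (ft_add_right φ a)

section Graded

open DirectSum

variable {K : Type*} [Field K] [Algebra K R] [Module K M] [IsScalarTower K R M]
variable (𝒜 : ℕ → Submodule K R) [GradedAlgebra 𝒜]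
variable (ℳ : ℤ → Submodule K M) [DirectSum.Decomposition ℳ]
variable (q : ℕ)

/-- Inner: for homogeneous pieces -/
noncomputable def FrInner (i : ℕ) (ri : 𝒜 i) : (⨁ k, ℳ k) →+ (ℤ →₀ FrobMod R φ M) :=
  DirectSum.toAddMonoid fun k =>
    (Finsupp.singleAddHom ((i : ℤ) + q * k)).comp
      ((ftHom φ (ri : R)).comp (ℳ k).toAddSubgroup.subtype)

noncomputable def FrMid : (⨁ i, 𝒜 i) →+ ((⨁ k, ℳ k) →+ (ℤ →₀ FrobMod R φ M)) :=
  DirectSum.toAddMonoid fun i =>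
    { toFun := fun ri => FrInner φ 𝒜 ℳ q i ri
      map_zero' := by
        apply DirectSum.addHom_ext
        intro k y
        simp [FrInner, ftHom, ft_zero_left]
      map_add' := by
        intro r1 r2
        apply DirectSum.addHom_ext
        intro k y
        simp [FrInner, ftHom, ft_add_left] }

noncomputable def FrHom : FrobAlg R φ →+ (M →+ (ℤ →₀ FrobMod R φ M)) :=
  { toFun := fun a => (FrMid φ 𝒜 ℳ q (DirectSum.decompose 𝒜 (a : R))).comp
      (DirectSum.decomposeAddEquiv ℳ).toAddMonoidHom
    map_zero' := by
      show (FrMid φ 𝒜 ℳ q (DirectSum.decompose 𝒜 (0 : R))).comp _ = 0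
      rw [DirectSum.decompose_zero, map_zero, AddMonoidHom.zero_comp]
    map_add' := by
      intro (a : R) (b : R)
      show (FrMid φ 𝒜 ℳ q (DirectSum.decompose 𝒜 (_ + _ : R))).comp _ = _
      rw [DirectSum.decompose_add, map_add, AddMonoidHom.add_comp] }

lemma FrHom_homog {i : ℕ} {k : ℤ} {a : R} {x : M} (ha : a ∈ 𝒜 i) (hx : x ∈ ℳ k) :
    FrHom φ 𝒜 ℳ q (FrobAlg.of R φ a) x = Finsupp.single ((i : ℤ) + q * k) (ft φ a x) := by
  have h1 : (DirectSum.decomposeAddEquiv ℳ).toAddMonoidHom x = DirectSum.of _ k ⟨x, hx⟩ := by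
    simpa [DirectSum.decomposeAddEquiv_apply] using DirectSum.decompose_of_mem ℳ hx
  show ((FrMid φ 𝒜 ℳ q) ((DirectSum.decompose 𝒜) (a : R))).comp
      (DirectSum.decomposeAddEquiv ℳ).toAddMonoidHom x = _
  rw [AddMonoidHom.comp_apply, h1, DirectSum.decompose_of_mem 𝒜 ha]
  simp only [FrMid, FrInner, DirectSum.toAddMonoid_of]
  simp [ftHom]
  rfl


variable (hgsmul : ∀ (i : ℕ) (j : ℤ) (r : R) (x : M), r ∈ 𝒜 i → x ∈ ℳ j → r • x ∈ ℳ (i + j))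
variable (hφ : ∀ (e : ℕ) (r : R), r ∈ 𝒜 e → φ r ∈ 𝒜 (q * e))

include hgsmul hφ in
lemma FrHom_balance :
    ∀ (r : R) (a : FrobAlg R φ) (x : M),
      FrHom φ 𝒜 ℳ q (r • a) x = FrHom φ 𝒜 ℳ q a (r • x) := by
  have core : ∀ (e : ℕ) (re : 𝒜 e) (i : ℕ) (bi : 𝒜 i) (k : ℤ) (xk : ℳ k),
      FrHom φ 𝒜 ℳ q ((re : R) • FrobAlg.of R φ (bi : R)) (xk : M)
        = FrHom φ 𝒜 ℳ q (FrobAlg.of R φ (bi : R)) ((re : R) • (xk : M)) := by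
    intro e re i bi k xk
    have hsm : (re : R) • FrobAlg.of R φ (bi : R) = FrobAlg.of R φ (φ re * bi) := by
      rw [Algebra.smul_def]; rfl
    have hmem : (φ (re : R) * (bi : R)) ∈ 𝒜 (q * e + i) :=
      SetLike.mul_mem_graded (hφ e re re.2) bi.2
    rw [hsm, FrHom_homog φ 𝒜 ℳ q hmem xk.2,
      FrHom_homog φ 𝒜 ℳ q bi.2 (hgsmul e k re xk re.2 xk.2)]
    have hdeg : ((q * e + i : ℕ) : ℤ) + (q : ℤ) * k = (i : ℤ) + q * ((e : ℤ) + k) := by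
      push_cast; ring
    rw [hdeg, ft_balance]
  have stepx : ∀ (e : ℕ) (re : 𝒜 e) (i : ℕ) (bi : 𝒜 i) (x : M),
      FrHom φ 𝒜 ℳ q ((re : R) • FrobAlg.of R φ (bi : R)) x
        = FrHom φ 𝒜 ℳ q (FrobAlg.of R φ (bi : R)) ((re : R) • x) := by
    intro e re i bi x
    induction x using DirectSum.Decomposition.inductionOn ℳ with
    | zero => simp [smul_zero]
    | add x1 x2 hx1 hx2 => rw [map_add, smul_add, map_add, hx1, hx2]
    | homogeneous xk => exact core e re i bi _ xk
  have stepb : ∀ (e : ℕ) (re : 𝒜 e) (b : R) (x : M),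
      FrHom φ 𝒜 ℳ q ((re : R) • FrobAlg.of R φ b) x
        = FrHom φ 𝒜 ℳ q (FrobAlg.of R φ b) ((re : R) • x) := by
    intro e re b x
    induction b using DirectSum.Decomposition.inductionOn 𝒜 with
    | zero =>
        rw [show FrobAlg.of R φ (0 : R) = (0 : FrobAlg R φ) from rfl, smul_zero]
        simp
    | add b1 b2 h1 h2 =>
        rw [show FrobAlg.of R φ (b1 + b2) = FrobAlg.of R φ b1 + FrobAlg.of R φ b2 from rfl,
          smul_add, map_add, map_add, AddMonoidHom.add_apply, AddMonoidHom.add_apply, h1, h2]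
    | homogeneous bi => exact stepx e re _ bi x
  intro r a x
  induction r using DirectSum.Decomposition.inductionOn 𝒜 with
  | zero => simp [zero_smul]
  | add r1 r2 h1 h2 =>
      rw [add_smul, map_add, AddMonoidHom.add_apply, h1, h2, add_smul, map_add]
  | homogeneous re => exact stepb _ re a x

/-- The grading projection map on the Frobenius module, packaged as a `Finsupp`. -/
noncomputable def PiDec : FrobMod R φ M →+ (ℤ →₀ FrobMod R φ M) :=
  TensorProduct.liftAddHom (FrHom φ 𝒜 ℳ q) (FrHom_balance φ 𝒜 ℳ q hgsmul hφ)

lemma PiDec_ft (a : R) (x : M) :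
    PiDec φ 𝒜 ℳ q hgsmul hφ (ft φ a x) = FrHom φ 𝒜 ℳ q (FrobAlg.of R φ a) x := rfl

lemma PiDec_homog {i : ℕ} {k : ℤ} {a : R} {x : M} (ha : a ∈ 𝒜 i) (hx : x ∈ ℳ k) :
    PiDec φ 𝒜 ℳ q hgsmul hφ (ft φ a x) = Finsupp.single ((i : ℤ) + q * k) (ft φ a x) := by
  rw [PiDec_ft, FrHom_homog φ 𝒜 ℳ q ha hx]

lemma PiDec_sum (z : FrobMod R φ M) :
    (PiDec φ 𝒜 ℳ q hgsmul hφ z).sum (fun _ v => v) = z := by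
  have homog : ∀ (i : ℕ) (b : 𝒜 i) (k : ℤ) (x : ℳ k),
      (PiDec φ 𝒜 ℳ q hgsmul hφ (ft φ (b : R) (x : M))).sum (fun _ v => v)
        = ft φ (b : R) (x : M) := by
    intro i b k x
    rw [PiDec_homog φ 𝒜 ℳ q hgsmul hφ b.2 x.2, Finsupp.sum_single_index rfl]
  have hx : ∀ (i : ℕ) (b : 𝒜 i) (x : M),
      (PiDec φ 𝒜 ℳ q hgsmul hφ (ft φ (b : R) x)).sum (fun _ v => v) = ft φ (b : R) x := by
    intro i b x
    induction x using DirectSum.Decomposition.inductionOn ℳ with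
    | zero => rw [ft_zero_right]; simp
    | add x1 x2 h1 h2 =>
        rw [ft_add_right, map_add, Finsupp.sum_add_index' (fun _ => rfl) (fun _ _ _ => rfl),
          h1, h2]
    | homogeneous xk => exact homog i b _ xk
  have hb : ∀ (b : R) (x : M),
      (PiDec φ 𝒜 ℳ q hgsmul hφ (ft φ b x)).sum (fun _ v => v) = ft φ b x := by
    intro b x
    induction b using DirectSum.Decomposition.inductionOn 𝒜 with
    | zero => rw [ft_zero_left]; simp
    | add b1 b2 h1 h2 =>
        rw [ft_add_left, map_add, Finsupp.sum_add_index' (fun _ => rfl) (fun _ _ _ => rfl),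
          h1, h2]
    | homogeneous bi => exact hx _ bi x
  refine TensorProduct.induction_on z ?_ ?_ ?_
  · erw [map_zero, Finsupp.sum_zero_index]; rfl
  · intro a x; exact hb a x
  · intro z1 z2 h1 h2
    erw [map_add, Finsupp.sum_add_index' (fun _ => rfl) (fun _ _ _ => rfl), h1, h2]
    rfl

lemma PiDec_smul {e : ℕ} {r : R} (hr : r ∈ 𝒜 e) (z : FrobMod R φ M) (d : ℤ) :
    PiDec φ 𝒜 ℳ q hgsmul hφ (r • z) d = r • PiDec φ 𝒜 ℳ q hgsmul hφ z (d - e) := by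
  have homog : ∀ (i : ℕ) (b : 𝒜 i) (k : ℤ) (x : ℳ k),
      PiDec φ 𝒜 ℳ q hgsmul hφ (ft φ (r * b) (x : M)) d
        = r • PiDec φ 𝒜 ℳ q hgsmul hφ (ft φ (b : R) (x : M)) (d - e) := by
    intro i b k x
    have hrb : r * (b : R) ∈ 𝒜 (e + i) := SetLike.mul_mem_graded hr b.2
    rw [PiDec_homog φ 𝒜 ℳ q hgsmul hφ hrb x.2, PiDec_homog φ 𝒜 ℳ q hgsmul hφ b.2 x.2]
    by_cases hd : d = ((e + i : ℕ) : ℤ) + q * k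
    · have hd2 : d - e = (i : ℤ) + q * k := by push_cast at hd ⊢; omega
      rw [hd2, hd, Finsupp.single_eq_same, Finsupp.single_eq_same, smul_ft]
    · have hd2 : d - e ≠ (i : ℤ) + q * k := by push_cast at hd ⊢; omega
      rw [Finsupp.single_eq_of_ne hd, Finsupp.single_eq_of_ne hd2,
        smul_zero]
  have hx : ∀ (i : ℕ) (b : 𝒜 i) (x : M),
      PiDec φ 𝒜 ℳ q hgsmul hφ (ft φ (r * b) x) d
        = r • PiDec φ 𝒜 ℳ q hgsmul hφ (ft φ (b : R) x) (d - e) := by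
    intro i b x
    induction x using DirectSum.Decomposition.inductionOn ℳ with
    | zero => simp [ft_zero_right]
    | add x1 x2 h1 h2 =>
        rw [ft_add_right, ft_add_right, map_add, map_add, Finsupp.add_apply,
          Finsupp.add_apply, h1, h2, smul_add]
    | homogeneous xk => exact homog i b _ xk
  have hb : ∀ (b : R) (x : M),
      PiDec φ 𝒜 ℳ q hgsmul hφ (ft φ (r * b) x) d
        = r • PiDec φ 𝒜 ℳ q hgsmul hφ (ft φ b x) (d - e) := by
    intro b x
    induction b using DirectSum.Decomposition.inductionOn 𝒜 with
    | zero => rw [mul_zero]; simp [ft_zero_left]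
    | add b1 b2 h1 h2 =>
        rw [mul_add, ft_add_left, ft_add_left, map_add, map_add, Finsupp.add_apply,
          Finsupp.add_apply, h1, h2, smul_add]
    | homogeneous bi => exact hx _ bi x
  refine TensorProduct.induction_on z ?_ ?_ ?_
  · show PiDec φ 𝒜 ℳ q hgsmul hφ (r • (0 : FrobMod R φ M)) d
        = r • PiDec φ 𝒜 ℳ q hgsmul hφ (0 : FrobMod R φ M) (d - e)
    simp
  · intro (a : R) x
    show PiDec φ 𝒜 ℳ q hgsmul hφ (r • ft φ a x) d
        = r • PiDec φ 𝒜 ℳ q hgsmul hφ (ft φ a x) (d - e)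
    rw [smul_ft]
    exact hb a x
  · intro (z1 : FrobMod R φ M) (z2 : FrobMod R φ M) h1 h2
    show PiDec φ 𝒜 ℳ q hgsmul hφ (r • (z1 + z2)) d
        = r • PiDec φ 𝒜 ℳ q hgsmul hφ (z1 + z2) (d - e)
    rw [smul_add, map_add, map_add, Finsupp.add_apply, Finsupp.add_apply, h1, h2, smul_add]

lemma pidec_supp_empty {z : FrobMod R φ M}
    (h : (PiDec φ 𝒜 ℳ q hgsmul hφ z).support = ∅) : z = 0 := by
  have h0 : PiDec φ 𝒜 ℳ q hgsmul hφ z = 0 := Finsupp.support_eq_empty.mp h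
  have := PiDec_sum φ 𝒜 ℳ q hgsmul hφ z
  rw [h0] at this
  simpa using this.symm

lemma top_kill (a : R) (t : ℕ) (ht : ∀ i, t < i → GradedRing.proj 𝒜 i a = 0) :
    ∀ (n : ℕ) (z : FrobMod R φ M),
      (PiDec φ 𝒜 ℳ q hgsmul hφ z).support.card ≤ n → a • z = 0 →
      (GradedRing.proj 𝒜 t a) ^ n • z = 0 := by
  classical
  intro n
  induction n with
  | zero =>
      intro z hcard _
      have : (PiDec φ 𝒜 ℳ q hgsmul hφ z).support = ∅ := Finset.card_eq_zero.mp (le_antisymm hcard (Nat.zero_le _))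
      rw [pidec_supp_empty φ 𝒜 ℳ q hgsmul hφ this, smul_zero]
  | succ n ih =>
      intro z hcard haz
      by_cases hzz : z = 0
      · rw [hzz, smul_zero]
      set b := GradedRing.proj 𝒜 t a with hb
      have hsupp_ne : ((PiDec φ 𝒜 ℳ q hgsmul hφ z).support).Nonempty := by
        rcases Finset.eq_empty_or_nonempty ((PiDec φ 𝒜 ℳ q hgsmul hφ z).support) with h | h
        · exact absurd (pidec_supp_empty φ 𝒜 ℳ q hgsmul hφ h) hzz
        · exact h
      set j := ((PiDec φ 𝒜 ℳ q hgsmul hφ z).support).max' hsupp_ne with hj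
      have hbmem : b ∈ 𝒜 t := by rw [hb, GradedRing.proj_apply]; exact SetLike.coe_mem _
      set S := (DirectSum.decompose 𝒜 a).support with hS
      -- decompose a•z
      have hdec : a • z = ∑ i ∈ S, (GradedRing.proj 𝒜 i a) • z := by
        conv_lhs => rw [← DirectSum.sum_support_decompose 𝒜 a]
        rw [← Finset.sum_smul]
        rfl
      have claim1 : b • (PiDec φ 𝒜 ℳ q hgsmul hφ z) j = 0 := by
        have h0 : PiDec φ 𝒜 ℳ q hgsmul hφ (a • z) ((t : ℤ) + j) = 0 := by
          rw [haz, map_zero]; rfl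
        rw [hdec] at h0
        have hterm : ∀ i ∈ S, PiDec φ 𝒜 ℳ q hgsmul hφ ((GradedRing.proj 𝒜 i a) • z) ((t : ℤ) + j)
            = (GradedRing.proj 𝒜 i a) • (PiDec φ 𝒜 ℳ q hgsmul hφ z ((t : ℤ) + j - i)) := by
          intro i _
          exact PiDec_smul φ 𝒜 ℳ q hgsmul hφ
            (by rw [GradedRing.proj_apply]; exact SetLike.coe_mem _) z _
        have hsum : ∑ i ∈ S, (GradedRing.proj 𝒜 i a) • (PiDec φ 𝒜 ℳ q hgsmul hφ z ((t : ℤ) + j - i)) = 0 := by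
          rw [← Finset.sum_congr rfl hterm]
          rw [← Finsupp.finset_sum_apply, ← map_sum]
          exact h0
        have hmax : ∀ i ∈ S, i ≠ t →
            (GradedRing.proj 𝒜 i a) • (PiDec φ 𝒜 ℳ q hgsmul hφ z ((t : ℤ) + j - i)) = 0 := by
          intro i hiS hit
          have hle : i ≤ t := by
            by_contra hgt
            exact (GradedRing.mem_support_iff 𝒜 a i).mp hiS (ht i (by omega))
          have hlt : i < t := lt_of_le_of_ne hle hit
          have hidx : ((t : ℤ) + j - i) ∉ (PiDec φ 𝒜 ℳ q hgsmul hφ z).support := by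
            intro hmem
            have := Finset.le_max' _ _ hmem
            omega
          rw [Finsupp.notMem_support_iff.mp hidx, smul_zero]
        have := Finset.sum_eq_single (M := FrobMod R φ M) t hmax
          (fun hnt => by
            rw [(GradedRing.mem_support_iff 𝒜 a t).not_left.mp hnt]
            · rw [zero_smul]
            )
        rw [this] at hsum
        · rw [show (t : ℤ) + j - t = j by ring] at hsum
          exact hsum
      -- inductive step
      have haw : a • (b • z) = 0 := by rw [smul_comm, haz, smul_zero]
      have hwsupp : (PiDec φ 𝒜 ℳ q hgsmul hφ (b • z)).support
          ⊆ (((PiDec φ 𝒜 ℳ q hgsmul hφ z).support).image (fun e => e + (t : ℤ))).erase (j + (t : ℤ)) := by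
        intro d hd
        have hval : PiDec φ 𝒜 ℳ q hgsmul hφ (b • z) d
            = b • PiDec φ 𝒜 ℳ q hgsmul hφ z (d - t) :=
          PiDec_smul φ 𝒜 ℳ q hgsmul hφ hbmem z d
        have hne : PiDec φ 𝒜 ℳ q hgsmul hφ (b • z) d ≠ 0 := Finsupp.mem_support_iff.mp hd
        refine Finset.mem_erase.mpr ⟨?_, ?_⟩
        · intro hdjt
          apply hne
          rw [hval, hdjt, show (j : ℤ) + (t : ℤ) - (t : ℤ) = j by ring, claim1]
        · refine Finset.mem_image.mpr ⟨d - t, ?_, by ring⟩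
          refine Finsupp.mem_support_iff.mpr ?_
          intro h0
          exact hne (by rw [hval, h0, smul_zero])
      have hcard2 : (PiDec φ 𝒜 ℳ q hgsmul hφ (b • z)).support.card ≤ n := by
        have h1 := Finset.card_le_card hwsupp
        have hjmem : j + (t : ℤ) ∈ ((PiDec φ 𝒜 ℳ q hgsmul hφ z).support).image (fun e => e + (t : ℤ)) :=
          Finset.mem_image.mpr ⟨j, Finset.max'_mem _ _, rfl⟩
        have h2 := Finset.card_erase_of_mem hjmem
        have h3 := Finset.card_image_le
          (s := (PiDec φ 𝒜 ℳ q hgsmul hφ z).support) (f := fun e => e + t)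
        omega
      have := ih (b • z) hcard2 haw
      rw [pow_succ, mul_smul]
      exact this

include hgsmul hφ in
lemma comps_mem (P : Ideal R) (hP : P.IsPrime) (z : FrobMod R φ M) (hzz : z ≠ 0)
    (hPz : ∀ r : R, r ∈ P ↔ r • z = 0) :
    ∀ a ∈ P, ∀ i, GradedRing.proj 𝒜 i a ∈ P := by
  classical
  have key : ∀ (n : ℕ) (a : R), (DirectSum.decompose 𝒜 a).support.card ≤ n → a ∈ P →
      ∀ i, GradedRing.proj 𝒜 i a ∈ P := by
    intro n
    induction n with
    | zero =>
        intro a hcard _ i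
        have hsupp : (DirectSum.decompose 𝒜 a).support = ∅ :=
          Finset.card_eq_zero.mp (le_antisymm hcard (Nat.zero_le _))
        have : GradedRing.proj 𝒜 i a = 0 := by
          by_contra h
          exact absurd (hsupp ▸ (GradedRing.mem_support_iff 𝒜 a i).mpr h) (Finset.notMem_empty i)
        rw [this]; exact P.zero_mem
    | succ n ih =>
        intro a hcard haP i
        rcases Finset.eq_empty_or_nonempty (DirectSum.decompose 𝒜 a).support with hemp | hne
        · have : GradedRing.proj 𝒜 i a = 0 := by
            by_contra h
            exact absurd (hemp ▸ (GradedRing.mem_support_iff 𝒜 a i).mpr h) (Finset.notMem_empty i)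
          rw [this]; exact P.zero_mem
        set t := (DirectSum.decompose 𝒜 a).support.max' hne with htdef
        set b := GradedRing.proj 𝒜 t a with hb
        have hbP : b ∈ P := by
          have htop : ∀ i', t < i' → GradedRing.proj 𝒜 i' a = 0 := by
            intro i' hlt
            by_contra h
            have := Finset.le_max' _ _ ((GradedRing.mem_support_iff 𝒜 a i').mpr h)
            omega
          have hkill := top_kill φ 𝒜 ℳ q hgsmul hφ a t htop
            ((PiDec φ 𝒜 ℳ q hgsmul hφ z).support.card) z le_rfl ((hPz a).mp haP)
          have hbpow : b ^ ((PiDec φ 𝒜 ℳ q hgsmul hφ z).support.card) ∈ P :=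
            (hPz _).mpr hkill
          exact hP.mem_of_pow_mem _ hbpow
        have haP' : a - b ∈ P := P.sub_mem haP hbP
        have hsub : (DirectSum.decompose 𝒜 (a - b)).support
            ⊆ (DirectSum.decompose 𝒜 a).support.erase t := by
          intro i' hi'
          have hne0 : DirectSum.decompose 𝒜 (a - b) i' ≠ 0 := DFinsupp.mem_support_iff.mp hi'
          have hbmem : b ∈ 𝒜 t := by rw [hb, GradedRing.proj_apply]; exact SetLike.coe_mem _
          rw [DirectSum.decompose_sub, DirectSum.sub_apply,
            DirectSum.decompose_of_mem 𝒜 hbmem] at hne0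
          have hii : i' ≠ t := by
            intro hit
            subst hit
            apply hne0
            rw [DirectSum.of_eq_same]
            apply Subtype.ext
            simp only [AddSubgroupClass.coe_sub, ZeroMemClass.coe_zero]
            rw [hb, GradedRing.proj_apply, sub_self]
          refine Finset.mem_erase.mpr ⟨hii, DFinsupp.mem_support_iff.mpr fun h0 => hne0 ?_⟩
          rw [h0, DirectSum.of_eq_of_ne _ _ _ hii]
          simp
        have hcard' : (DirectSum.decompose 𝒜 (a - b)).support.card ≤ n := by
          have h1 := Finset.card_le_card hsub
          have h2 : ((DirectSum.decompose 𝒜 a).support.erase t).card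
              = (DirectSum.decompose 𝒜 a).support.card - 1 :=
            Finset.card_erase_of_mem (Finset.max'_mem _ hne)
          omega
        have hcomps := ih (a - b) hcard' haP'
        by_cases hit : i = t
        · rw [hit]; exact hbP
        · have := hcomps i
          have hbmem : b ∈ 𝒜 t := by rw [hb, GradedRing.proj_apply]; exact SetLike.coe_mem _
          have hprojb : GradedRing.proj 𝒜 i b = 0 := by
            rw [GradedRing.proj_apply, DirectSum.decompose_of_mem 𝒜 hbmem,
              DirectSum.of_eq_of_ne _ _ _ hit]
            rfl
          have : GradedRing.proj 𝒜 i a ∈ P := by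
            have hmap : GradedRing.proj 𝒜 i (a - b) = GradedRing.proj 𝒜 i a := by
              rw [map_sub, hprojb, sub_zero]
            rw [← hmap]; exact this
          exact this
  intro a haP i
  exact key ((DirectSum.decompose 𝒜 a).support.card) a le_rfl haP i

end Graded

lemma frob_ann_smul (s : R) (hs : ∀ x : M, s • x = 0) (z : FrobMod R φ M) :
    φ s • z = 0 := by
  refine TensorProduct.induction_on z ?_ ?_ ?_
  · exact (smul_zero (φ s) : φ s • (0 : FrobMod R φ M) = 0)
  · intro (a : R) x
    show φ s • ft φ a x = 0
    rw [smul_ft, ft_balance, hs x, ft_zero_right]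
  · intro z1 z2 h1 h2
    erw [smul_add, h1, h2, add_zero]

end Aux

section RingSide

variable {K R : Type*} [Field K] [CommRing R] [Algebra K R]
variable (𝒜 : ℕ → Submodule K R) [GradedAlgebra 𝒜]

lemma std_le_irrelevant (hstd : 𝒜 0 = (1 : Submodule K R)) (P : Ideal R) (hP : P.IsPrime)
    (hcomps : ∀ a ∈ P, ∀ i, GradedRing.proj 𝒜 i a ∈ P) :
    P ≤ (HomogeneousIdeal.irrelevant 𝒜).toIdeal := by
  intro a haP
  rw [HomogeneousIdeal.mem_iff, HomogeneousIdeal.mem_irrelevant_iff]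
  have h0 : GradedRing.proj 𝒜 0 a ∈ 𝒜 0 := by
    rw [GradedRing.proj_apply]; exact SetLike.coe_mem _
  rw [hstd] at h0
  obtain ⟨c, hc⟩ := Submodule.mem_one.mp h0
  by_contra hne
  have hc0 : c ≠ 0 := by rintro rfl; rw [map_zero] at hc; exact hne hc.symm
  have hunit : IsUnit (GradedRing.proj 𝒜 0 a) := by
    rw [← hc]
    exact (IsUnit.mk0 c hc0).map (algebraMap K R)
  exact hP.ne_top (P.eq_top_of_isUnit_mem (hcomps a haP 0) hunit)

lemma std_irrelevant_isPrime [Nontrivial R] (hstd : 𝒜 0 = (1 : Submodule K R)) :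
    ((HomogeneousIdeal.irrelevant 𝒜).toIdeal).IsPrime := by
  rw [Ideal.isPrime_iff]
  constructor
  · rw [Ideal.ne_top_iff_one]
    intro h1
    rw [HomogeneousIdeal.mem_iff, HomogeneousIdeal.mem_irrelevant_iff] at h1
    have : GradedRing.proj 𝒜 0 (1 : R) = 1 := by
      have := map_one (GradedRing.projZeroRingHom 𝒜)
      exact this
    rw [this] at h1
    exact one_ne_zero h1
  · intro x y hxy
    simp only [HomogeneousIdeal.mem_iff, HomogeneousIdeal.mem_irrelevant_iff] at hxy ⊢
    have hmul : GradedRing.proj 𝒜 0 (x * y) = GradedRing.proj 𝒜 0 x * GradedRing.proj 𝒜 0 y :=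
      map_mul (GradedRing.projZeroRingHom 𝒜) x y
    rw [hmul] at hxy
    have hx0 : GradedRing.proj 𝒜 0 x ∈ 𝒜 0 := by
      rw [GradedRing.proj_apply]; exact SetLike.coe_mem _
    have hy0 : GradedRing.proj 𝒜 0 y ∈ 𝒜 0 := by
      rw [GradedRing.proj_apply]; exact SetLike.coe_mem _
    rw [hstd] at hx0 hy0
    obtain ⟨c, hc⟩ := Submodule.mem_one.mp hx0
    obtain ⟨c', hc'⟩ := Submodule.mem_one.mp hy0
    rw [← hc, ← hc', ← map_mul] at hxy
    have hinj : Function.Injective (algebraMap K R) := (algebraMap K R).injective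
    have : c * c' = 0 := by
      apply hinj
      rw [hxy, map_zero]
    rcases mul_eq_zero.mp this with h | h
    · left; rw [← hc, h, map_zero]
    · right; rw [← hc', h, map_zero]

end RingSide

section Chain

variable {R : Type*} [CommRing R]

lemma chain_dim_one {I Q P P' : Ideal R} (hdim : ringKrullDim (R ⧸ I) = 1)
    (hQ : Q.IsPrime) (hP : P.IsPrime) (hP' : P'.IsPrime)
    (hIQ : I ≤ Q) (h1 : Q < P) (h2 : P < P') : False := by
  have hIP : I ≤ P := le_trans hIQ h1.le
  have hIP' : I ≤ P' := le_trans hIP h2.le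
  let f := Ideal.Quotient.mk I
  have hf : Function.Surjective f := Ideal.Quotient.mk_surjective
  have hker : RingHom.ker f = I := Ideal.mk_ker
  have hmapp : ∀ (J : Ideal R), J.IsPrime → I ≤ J → (J.map f).IsPrime := by
    intro J hJ hIJ
    haveI := hJ
    exact Ideal.map_isPrime_of_surjective hf ((le_of_eq hker).trans hIJ)
  have hcomap : ∀ (J : Ideal R), I ≤ J → (J.map f).comap f = J := by
    intro J hIJ
    rw [Ideal.comap_map_of_surjective f hf, ← RingHom.ker_eq_comap_bot, hker,
      sup_eq_left.mpr hIJ]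
  have hstrict : ∀ (J J' : Ideal R), I ≤ J → I ≤ J' → J < J' → J.map f < J'.map f := by
    intro J J' hIJ hIJ' hJJ
    refine lt_of_le_of_ne (Ideal.map_mono hJJ.le) ?_
    intro heq
    have := congrArg (Ideal.comap f) heq
    rw [hcomap J hIJ, hcomap J' hIJ'] at this
    exact hJJ.ne this
  let x0 : PrimeSpectrum (R ⧸ I) := ⟨Q.map f, hmapp Q hQ hIQ⟩
  let x1 : PrimeSpectrum (R ⧸ I) := ⟨P.map f, hmapp P hP hIP⟩
  let x2 : PrimeSpectrum (R ⧸ I) := ⟨P'.map f, hmapp P' hP' hIP'⟩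
  let c : LTSeries (PrimeSpectrum (R ⧸ I)) :=
    { length := 2
      toFun := ![x0, x1, x2]
      step := by
        intro i
        fin_cases i
        · exact hstrict Q P hIQ hIP h1
        · exact hstrict P P' hIP hIP' h2 }
  have hle := Order.LTSeries.length_le_krullDim c
  rw [show Order.krullDim (PrimeSpectrum (R ⧸ I)) = ringKrullDim (R ⧸ I) from rfl, hdim] at hle
  norm_num [c] at hle


end Chain

theorem union_ass_frobenius_finite'
    {K R : Type*} [Field K] [CommRing R] [Algebra K R] [IsNoetherianRing R]
    (p : ℕ) [Fact p.Prime] [CharP R p]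
    (𝒜 : ℕ → Submodule K R) [GradedAlgebra 𝒜] (hstd : 𝒜 0 = (1 : Submodule K R))
    (M : Type*) [AddCommGroup M] [Module R M] [Module K M] [IsScalarTower K R M]
    (ℳ : ℤ → Submodule K M) (hdecomp : DirectSum.IsInternal ℳ)
    (hgsmul : ∀ (i : ℕ) (j : ℤ) (r : R) (x : M), r ∈ 𝒜 i → x ∈ ℳ j → r • x ∈ ℳ (i + j))
    (hdim : ringKrullDim (R ⧸ (⊤ : Submodule R M).annihilator) = 1) :
    (⋃ n : ℕ, associatedPrimes R (FrobMod R (iterateFrobenius R p n) M)) ⊆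
      ((⊤ : Submodule R M).annihilator).minimalPrimes ∪
        {(HomogeneousIdeal.irrelevant 𝒜).toIdeal} ∧
    (⋃ n : ℕ, associatedPrimes R (FrobMod R (iterateFrobenius R p n) M)).Finite := by
  classical
  haveI : Nontrivial R := CharP.nontrivial_of_char_ne_one (R := R) (v := p)
    (Nat.Prime.ne_one Fact.out)
  letI : DirectSum.Decomposition ℳ := hdecomp.chooseDecomposition
  set I := (⊤ : Submodule R M).annihilator with hIdef
  set m := (HomogeneousIdeal.irrelevant 𝒜).toIdeal with hmdef
  have hsub : (⋃ n : ℕ, associatedPrimes R (FrobMod R (iterateFrobenius R p n) M)) ⊆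
      I.minimalPrimes ∪ {m} := by
    intro P hPmem
    obtain ⟨n, hPn⟩ := Set.mem_iUnion.mp hPmem
    set φ := iterateFrobenius R p n with hφdef
    have hφ : ∀ (e : ℕ) (r : R), r ∈ 𝒜 e → φ r ∈ 𝒜 (p ^ n * e) := by
      intro e r hr
      rw [hφdef, iterateFrobenius_def]
      have := SetLike.pow_mem_graded (p ^ n) hr
      rwa [smul_eq_mul] at this
    obtain ⟨hprime, z, hzeq⟩ := isAssociatedPrime_iff.mp hPn
    have hPz : ∀ r : R, r ∈ P ↔ r • z = 0 := by
      intro r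
      rw [hzeq, Submodule.mem_colon_singleton, Submodule.mem_bot]
    have hz0 : z ≠ 0 := by
      rintro rfl
      exact hprime.ne_top (Ideal.eq_top_iff_one P |>.mpr ((hPz 1).mpr (smul_zero 1)))
    have hIP : I ≤ P := by
      intro s hs
      have hsx : ∀ x : M, s • x = 0 := fun x =>
        Submodule.mem_annihilator.mp hs x Submodule.mem_top
      have h1 : φ s • z = 0 := frob_ann_smul φ s hsx z
      have h2 : s ^ p ^ n ∈ P := by
        rw [← iterateFrobenius_def]
        exact (hPz _).mpr h1
      exact hprime.mem_of_pow_mem _ h2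
    by_cases hmin : P ∈ I.minimalPrimes
    · exact Or.inl hmin
    · right
      have hcomps := comps_mem φ 𝒜 ℳ (p ^ n) hgsmul hφ P hprime z hz0 hPz
      have hPle : P ≤ m := std_le_irrelevant 𝒜 hstd P hprime hcomps
      haveI := hprime
      obtain ⟨Q, hQmin, hQP⟩ := Ideal.exists_minimalPrimes_le hIP
      have hQP_lt : Q < P := lt_of_le_of_ne hQP (fun h => hmin (h ▸ hQmin))
      have hmprime : m.IsPrime := std_irrelevant_isPrime 𝒜 hstd
      have hPm : P = m := by
        by_contra hne
        exact chain_dim_one hdim hQmin.1.1 hprime hmprime hQmin.1.2 hQP_lt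
          (lt_of_le_of_ne hPle hne)
      simp [hPm]
  refine ⟨hsub, ?_⟩
  have hfin : (I.minimalPrimes ∪ {m} : Set (Ideal R)).Finite := by
    refine Set.Finite.union ?_ (Set.finite_singleton _)
    rw [Ideal.minimalPrimes_eq_comap]
    exact (minimalPrimes.finite_of_isNoetherianRing (R ⧸ I)).image _
  exact hfin.subset hsub


/-- Lemma 6.2: for a one-dimensional finitely generated graded module `M` over a standard graded
ring of prime characteristic `p`, the union `⋃ₙ Ass(Fⁿ(M))` is finite; indeed it is contained in
the union of the (finitely many) minimal primes of the support of `M` and the irrelevant maximal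
ideal. -/
theorem union_ass_frobenius_finite
    {K R : Type*} [Field K] [CommRing R] [Algebra K R] [IsNoetherianRing R]
    (p : ℕ) [Fact p.Prime] [CharP R p]
    (𝒜 : ℕ → Submodule K R) [GradedAlgebra 𝒜] (hstd : IsStandardGraded 𝒜)
    (M : Type*) [AddCommGroup M] [Module R M] [Module K M] [IsScalarTower K R M]
    [Module.Finite R M]
    (ℳ : ℤ → Submodule K M) (hdecomp : DirectSum.IsInternal ℳ)
    (hgsmul : ∀ (i : ℕ) (j : ℤ) (r : R) (x : M), r ∈ 𝒜 i → x ∈ ℳ j → r • x ∈ ℳ (i + j))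
    (hdim : ringKrullDim (R ⧸ (⊤ : Submodule R M).annihilator) = 1) :
    (⋃ n : ℕ, associatedPrimes R (FrobMod R (iterateFrobenius R p n) M)) ⊆
      ((⊤ : Submodule R M).annihilator).minimalPrimes ∪
        {(HomogeneousIdeal.irrelevant 𝒜).toIdeal} ∧
    (⋃ n : ℕ, associatedPrimes R (FrobMod R (iterateFrobenius R p n) M)).Finite :=
  union_ass_frobenius_finite' p 𝒜 hstd.1 M ℳ hdecomp hgsmul hdim
end

section
/- Let R = 𝔽_p[X, Y, Z]/(X³ + Y³ + Z³) be the Fermat cubic with irrelevant maximal ideal m = (x, y, z) and let I = (x, y). Then for every q = pⁿ: m^{2q+1}·H⁰_m(R/I^[q]) = 0 but m^{2q}·H⁰_m(R/I^[q]) ≠ 0; equivalently, since I is m-primary and H⁰_m(R/I^[q]) = R/I^[q], one has m^{2q+1} ⊆ (x^q, y^q) while m^{2q} ⊄ (x^q, y^q). -/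
set_option synthInstance.maxHeartbeats 1000000
set_option maxHeartbeats 1000000

/-- The coordinate ring of the Fermat cubic `X³ + Y³ + Z³ = 0` over `𝔽_p`. -/
abbrev FermatCubic (p : ℕ) : Type :=
  MvPolynomial (Fin 3) (ZMod p) ⧸
    Ideal.span {(MvPolynomial.X 0 : MvPolynomial (Fin 3) (ZMod p)) ^ 3 +
      MvPolynomial.X 1 ^ 3 + MvPolynomial.X 2 ^ 3}

/-- The image of a variable in the Fermat cubic coordinate ring. -/
noncomputable def fermatVar (p : ℕ) (i : Fin 3) : FermatCubic p :=
  Ideal.Quotient.mk _ (MvPolynomial.X i)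

open Polynomial


lemma span_triple_pow_le {R : Type*} [CommRing R] (x y z : R) :
    ∀ (N : ℕ) (K : Ideal R), (∀ a b c : ℕ, a + b + c = N → x ^ a * y ^ b * z ^ c ∈ K) →
      Ideal.span {x, y, z} ^ N ≤ K := by
  intro N
  induction N with
  | zero =>
    intro K h
    rw [pow_zero, Ideal.one_eq_top, top_le_iff, Ideal.eq_top_iff_one]
    simpa using h 0 0 0 rfl
  | succ N ih =>
    intro K h
    rw [pow_succ, Ideal.mul_le]
    intro r hr s hs
    have hr' : r ∈ K.colon (Ideal.span {x, y, z}) := by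
      refine ih _ ?_ hr
      intro a b c habc
      rw [Submodule.mem_colon]
      intro s' hs'
      induction hs' using Submodule.span_induction with
      | mem w hw =>
        simp only [Set.mem_insert_iff, Set.mem_singleton_iff] at hw
        rcases hw with rfl | rfl | rfl
        · have e : (w ^ a * y ^ b * z ^ c) • w = w ^ (a+1) * y ^ b * z ^ c := by
            rw [smul_eq_mul]; ring
          rw [e]; exact h (a+1) b c (by omega)
        · have e : (x ^ a * w ^ b * z ^ c) • w = x ^ a * w ^ (b+1) * z ^ c := by
            rw [smul_eq_mul]; ring
          rw [e]; exact h a (b+1) c (by omega)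
        · have e : (x ^ a * y ^ b * w ^ c) • w = x ^ a * y ^ b * w ^ (c+1) := by
            rw [smul_eq_mul]; ring
          rw [e]; exact h a b (c+1) (by omega)
      | zero => simp
      | add u v _ _ hu hv => rw [smul_add]; exact K.add_mem hu hv
      | smul t u _ hu =>
        rw [smul_comm]
        exact K.smul_mem t hu
    have := Submodule.mem_colon.mp hr' s hs
    simpa using this

lemma term_mem {R : Type*} [CommRing R] (x y : R) (q : ℕ) {i j : ℕ} (w : R)
    (h : q ≤ i ∨ q ≤ j) : x ^ i * y ^ j * w ∈ Ideal.span {x ^ q, y ^ q} := by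
  rcases h with h | h
  · obtain ⟨d, rfl⟩ := Nat.exists_eq_add_of_le h
    have e : x ^ (q + d) * y ^ j * w = x ^ q * (x ^ d * y ^ j * w) := by ring
    rw [e]
    exact Ideal.mul_mem_right _ _ (Ideal.subset_span (Set.mem_insert _ _))
  · obtain ⟨d, rfl⟩ := Nat.exists_eq_add_of_le h
    have e : x ^ i * y ^ (q + d) * w = y ^ q * (x ^ i * y ^ d * w) := by ring
    rw [e]
    exact Ideal.mul_mem_right _ _ (Ideal.subset_span (Set.mem_insert_of_mem _ rfl))

lemma mono_mem {R : Type*} [CommRing R] (x y z : R) (q : ℕ) (hq : 0 < q)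
    (hrel : z ^ 3 = -(x ^ 3 + y ^ 3)) (a b c : ℕ) (habc : a + b + c = 2 * q + 1) :
    x ^ a * y ^ b * z ^ c ∈ Ideal.span {x ^ q, y ^ q} := by
  rcases le_or_gt q a with ha | ha
  · exact term_mem x y q _ (Or.inl ha)
  rcases le_or_gt q b with hb | hb
  · exact term_mem x y q _ (Or.inr hb)
  -- now c ≥ 3
  have hkr : 3 * (c / 3) + c % 3 = c := Nat.div_add_mod c 3
  have hr3 : c % 3 < 3 := Nat.mod_lt _ (by norm_num)
  set k := c / 3 with hk
  set r := c % 3 with hr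
  have hz : z ^ c = (-1 : R) ^ k * ((x ^ 3 + y ^ 3) ^ k * z ^ r) := by
    rw [← hkr, pow_add, pow_mul, hrel, neg_pow]
    ring
  have e : x ^ a * y ^ b * z ^ c
      = (-1 : R) ^ k * (x ^ a * y ^ b * ((x ^ 3 + y ^ 3) ^ k * z ^ r)) := by
    rw [hz]; ring
  rw [e]
  refine Ideal.mul_mem_left _ _ ?_
  rw [add_pow]
  have e2 : x ^ a * y ^ b *
      ((∑ i ∈ Finset.range (k + 1), (x ^ 3) ^ i * (y ^ 3) ^ (k - i) * (k.choose i : R)) * z ^ r)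
      = ∑ i ∈ Finset.range (k + 1),
          (k.choose i : R) * (x ^ (a + 3 * i) * y ^ (b + 3 * (k - i)) * z ^ r) := by
    rw [Finset.sum_mul, Finset.mul_sum]
    refine Finset.sum_congr rfl fun i _ => ?_
    ring
  rw [e2]
  refine Ideal.sum_mem _ fun i hi => ?_
  rw [Finset.mem_range] at hi
  refine Ideal.mul_mem_left _ _ (term_mem x y q _ ?_)
  omega

lemma of_mul_rootpow {A : Type*} [CommRing A] (f : A[X]) (a : A) (k : ℕ) :
    AdjoinRoot.of f a * (AdjoinRoot.root f) ^ k = AdjoinRoot.mk f (C a * X ^ k) := by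
  rw [map_mul, map_pow, AdjoinRoot.mk_X]
  rfl

lemma scaled_rootpow_ne {A : Type*} [CommRing A] (f : A[X]) (hf : f.Monic) {a : A}
    (ha : a ≠ 0) (k : ℕ) (hk : k < f.natDegree) :
    AdjoinRoot.of f a * (AdjoinRoot.root f) ^ k ≠ 0 := by
  rw [of_mul_rootpow]
  refine AdjoinRoot.mk_ne_zero_of_natDegree_lt hf ?_ ?_
  · intro h0
    apply ha
    have := congrArg (fun P => P.coeff k) h0
    simpa [coeff_C_mul, coeff_X_pow] using this
  · haveI := nontrivial_of_ne a 0 ha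
    exact lt_of_le_of_lt (natDegree_C_mul_le _ _) (by rwa [natDegree_X_pow])

section Tower
variable (p q : ℕ) [Fact p.Prime]

noncomputable abbrev FC1 := AdjoinRoot ((X : (ZMod p)[X]) ^ q)
noncomputable abbrev FC2 := AdjoinRoot ((X : (FC1 p q)[X]) ^ q)

noncomputable def fu : FC2 p q := AdjoinRoot.of _ (AdjoinRoot.root _)
noncomputable def fv : FC2 p q := AdjoinRoot.root _
noncomputable def fe : FC2 p q := fu p q ^ 3 + fv p q ^ 3

noncomputable def f3 : (FC2 p q)[X] := X ^ 3 + C (fe p q)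
noncomputable abbrev FB := AdjoinRoot (f3 p q)

noncomputable def fa : FB p q := AdjoinRoot.of _ (fu p q)
noncomputable def fb : FB p q := AdjoinRoot.of _ (fv p q)
noncomputable def fc : FB p q := AdjoinRoot.root _

variable (hq : 0 < q)

lemma root1_pow_q : (AdjoinRoot.root ((X : (ZMod p)[X]) ^ q)) ^ q = 0 := by
  rw [← AdjoinRoot.mk_X, ← map_pow, AdjoinRoot.mk_self]

lemma fu_pow_q : fu p q ^ q = 0 := by
  rw [fu, ← map_pow, root1_pow_q, map_zero]

lemma fv_pow_q : fv p q ^ q = 0 := by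
  rw [fv, ← AdjoinRoot.mk_X, ← map_pow, AdjoinRoot.mk_self]

include hq in
lemma root1_pow_ne : (AdjoinRoot.root ((X : (ZMod p)[X]) ^ q)) ^ (q - 1) ≠ 0 := by
  rw [← AdjoinRoot.mk_X, ← map_pow]
  refine AdjoinRoot.mk_ne_zero_of_natDegree_lt (monic_X_pow q) (pow_ne_zero _ X_ne_zero) ?_
  rw [natDegree_X_pow, natDegree_X_pow]
  omega

include hq in
lemma g_ne : fu p q ^ (q - 1) * fv p q ^ (q - 1) ≠ 0 := by
  have e : fu p q ^ (q - 1) * fv p q ^ (q - 1)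
      = AdjoinRoot.of _ ((AdjoinRoot.root ((X : (ZMod p)[X]) ^ q)) ^ (q - 1))
        * (AdjoinRoot.root ((X : (FC1 p q)[X]) ^ q)) ^ (q - 1) := by
    rw [fu, fv, map_pow]
  rw [e]
  haveI := nontrivial_of_ne _ _ (root1_pow_ne p q hq)
  refine scaled_rootpow_ne _ (monic_X_pow q) (root1_pow_ne p q hq) _ ?_
  rw [natDegree_X_pow]; omega

include hq in
lemma FC2_nontrivial : Nontrivial (FC2 p q) :=
  nontrivial_of_ne _ _ (g_ne p q hq)

include hq in
lemma f3_monic : (f3 p q).Monic := monic_X_pow_add_C _ (by norm_num)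

include hq in
lemma f3_natDegree : (f3 p q).natDegree = 3 := by
  haveI := FC2_nontrivial p q hq
  exact natDegree_X_pow_add_C

include hq in
lemma t_ne : fa p q ^ (q - 1) * fb p q ^ (q - 1) * fc p q ^ 2 ≠ 0 := by
  have e : fa p q ^ (q - 1) * fb p q ^ (q - 1) * fc p q ^ 2
      = AdjoinRoot.of _ (fu p q ^ (q - 1) * fv p q ^ (q - 1)) * (AdjoinRoot.root (f3 p q)) ^ 2 := by
    rw [fa, fb, fc, map_mul, map_pow, map_pow]
  rw [e]
  refine scaled_rootpow_ne _ (f3_monic p q hq) (g_ne p q hq) _ ?_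
  rw [f3_natDegree p q hq]; omega

include hq in
lemma FB_nontrivial : Nontrivial (FB p q) :=
  nontrivial_of_ne _ _ (t_ne p q hq)

lemma fc_cube : fc p q ^ 3 = -(fa p q ^ 3 + fb p q ^ 3) := by
  have h0 : AdjoinRoot.mk (f3 p q) (X ^ 3 + C (fe p q)) = 0 := AdjoinRoot.mk_self
  rw [map_add, map_pow, AdjoinRoot.mk_X] at h0
  have hC : AdjoinRoot.mk (f3 p q) (C (fe p q)) = AdjoinRoot.of _ (fe p q) := rfl
  rw [hC, fe, map_add, map_pow, map_pow] at h0
  rw [fc, fa, fb]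
  linear_combination h0

lemma fa_pow_q : fa p q ^ q = 0 := by
  rw [fa, ← map_pow, fu_pow_q, map_zero]

lemma fb_pow_q : fb p q ^ q = 0 := by
  rw [fb, ← map_pow, fv_pow_q, map_zero]

end Tower

section Hom
variable (p q : ℕ) [Fact p.Prime]

noncomputable def SF := MvPolynomial (Fin 3) (ZMod p)

noncomputable def psi : MvPolynomial (Fin 3) (ZMod p) →+* FB p q :=
  MvPolynomial.eval₂Hom
    ((AdjoinRoot.of (f3 p q)).comp ((AdjoinRoot.of _).comp (algebraMap (ZMod p) (FC1 p q))))
    ![fa p q, fb p q, fc p q]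

lemma psi_X0 : psi p q (MvPolynomial.X 0) = fa p q := by
  simp [psi]
lemma psi_X1 : psi p q (MvPolynomial.X 1) = fb p q := by
  simp [psi]
lemma psi_X2 : psi p q (MvPolynomial.X 2) = fc p q := by
  simp [psi]

lemma psi_F : psi p q (MvPolynomial.X 0 ^ 3 + MvPolynomial.X 1 ^ 3 + MvPolynomial.X 2 ^ 3) = 0 := by
  rw [map_add, map_add, map_pow, map_pow, map_pow, psi_X0, psi_X1, psi_X2, fc_cube]
  ring
end Hom

section Lift
variable (p q : ℕ) [Fact p.Prime]

noncomputable def psibar : FermatCubic p →+* FB p q :=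
  Ideal.Quotient.lift _ (psi p q) (by
    intro f hf
    obtain ⟨g, rfl⟩ := Ideal.mem_span_singleton'.mp hf
    rw [map_mul, psi_F, mul_zero])

lemma psibar_x : psibar p q (fermatVar p 0) = fa p q := by
  rw [fermatVar, psibar, Ideal.Quotient.lift_mk, psi_X0]
lemma psibar_y : psibar p q (fermatVar p 1) = fb p q := by
  rw [fermatVar, psibar, Ideal.Quotient.lift_mk, psi_X1]
lemma psibar_z : psibar p q (fermatVar p 2) = fc p q := by
  rw [fermatVar, psibar, Ideal.Quotient.lift_mk, psi_X2]

variable (hq : 0 < q)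

include hq in
lemma witness_not_mem :
    fermatVar p 0 ^ (q - 1) * fermatVar p 1 ^ (q - 1) * fermatVar p 2 ^ 2 ∉
      Ideal.span {fermatVar p 0 ^ q, fermatVar p 1 ^ q} := by
  intro hs
  rw [Ideal.mem_span_pair] at hs
  obtain ⟨A, B, hAB⟩ := hs
  have := congrArg (psibar p q) hAB
  simp only [map_add, map_mul, map_pow] at this
  rw [psibar_x, psibar_y, psibar_z, fa_pow_q, fb_pow_q] at this
  simp only [mul_zero, add_zero, zero_add] at this
  exact t_ne p q hq this.symm

-- relation in FermatCubic
lemma fermat_rel : fermatVar p 2 ^ 3 = -(fermatVar p 0 ^ 3 + fermatVar p 1 ^ 3) := by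
  have h0 : (Ideal.Quotient.mk (Ideal.span {(MvPolynomial.X 0 : MvPolynomial (Fin 3) (ZMod p)) ^ 3 +
      MvPolynomial.X 1 ^ 3 + MvPolynomial.X 2 ^ 3}))
      (MvPolynomial.X 0 ^ 3 + MvPolynomial.X 1 ^ 3 + MvPolynomial.X 2 ^ 3) = 0 := by
    rw [Ideal.Quotient.eq_zero_iff_mem]
    exact Ideal.subset_span rfl
  rw [map_add, map_add, map_pow, map_pow, map_pow] at h0
  rw [fermatVar, fermatVar, fermatVar]
  linear_combination h0

-- CharP of FermatCubic
include hq in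
lemma fermat_charP : CharP (FermatCubic p) p := by
  have hinj : Function.Injective ((Ideal.Quotient.mk _).comp (MvPolynomial.C) :
      ZMod p →+* FermatCubic p) := by
    have hcomp : (psibar p q).comp ((Ideal.Quotient.mk _).comp (MvPolynomial.C)) =
        ((AdjoinRoot.of (f3 p q)).comp ((AdjoinRoot.of _).comp (algebraMap (ZMod p) (FC1 p q)))) := by
      ext a
      simp [psibar, psi]
    intro a b hab
    haveI := FB_nontrivial p q hq
    have : (psibar p q).comp ((Ideal.Quotient.mk _).comp (MvPolynomial.C)) a =
        (psibar p q).comp ((Ideal.Quotient.mk _).comp (MvPolynomial.C)) b := by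
      simp only [RingHom.comp_apply] at hab ⊢
      rw [hab]
    rw [hcomp] at this
    exact RingHom.injective _ this
  exact charP_of_injective_ringHom hinj p

end Lift

section Main
variable (p q : ℕ) [Fact p.Prime] (hq : 0 < q)

include hq in
lemma frob_eq (n : ℕ) (hqn : q = p ^ n) :
    (Ideal.span {fermatVar p 0, fermatVar p 1}).frobPow q =
      Ideal.span {fermatVar p 0 ^ q, fermatVar p 1 ^ q} := by
  haveI := fermat_charP p q hq
  apply le_antisymm
  · rw [Ideal.frobPow, Ideal.span_le]
    rintro _ ⟨f, hf, rfl⟩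
    simp only [SetLike.mem_coe] at hf ⊢
    rw [Ideal.mem_span_pair] at hf ⊢
    obtain ⟨u, v, rfl⟩ := hf
    refine ⟨u ^ q, v ^ q, ?_⟩
    subst hqn
    rw [add_pow_char_pow, mul_pow, mul_pow]
  · rw [Ideal.span_le]
    intro r hr
    simp only [Set.mem_insert_iff, Set.mem_singleton_iff] at hr
    rcases hr with rfl | rfl
    · exact Ideal.subset_span ⟨fermatVar p 0, Ideal.subset_span (Set.mem_insert _ _), rfl⟩
    · exact Ideal.subset_span ⟨fermatVar p 1, Ideal.subset_span (Set.mem_insert_of_mem _ rfl), rfl⟩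

lemma quot_smul {R : Type*} [CommRing R] (I : Ideal R) (r f : R) :
    r • (Ideal.Quotient.mk I f) = Ideal.Quotient.mk I (r * f) := rfl

end Main


/-- Lemma 11.1: in the Fermat cubic `R = 𝔽_p[X,Y,Z]/(X³+Y³+Z³)` with irrelevant maximal ideal
`m = (x,y,z)` and `I = (x,y)`, for every `q = pⁿ` one has
`m^{2q+1}·H⁰_m(R/I^[q]) = 0` but `m^{2q}·H⁰_m(R/I^[q]) ≠ 0`; equivalently (as `I` is
`m`-primary, so that `H⁰_m(R/I^[q]) = R/I^[q]`), `m^{2q+1} ⊆ (x^q, y^q)` while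
`m^{2q} ⊄ (x^q, y^q)`. -/
theorem fermat_cubic_lc_exponent (p : ℕ) [Fact p.Prime] : ∀ n : ℕ,
    (Ideal.span {fermatVar p 0, fermatVar p 1, fermatVar p 2} ^ (2 * p ^ n + 1)) •
        H0 (Ideal.span {fermatVar p 0, fermatVar p 1, fermatVar p 2})
          (FermatCubic p ⧸ (Ideal.span {fermatVar p 0, fermatVar p 1}).frobPow (p ^ n)) = ⊥ ∧
    (Ideal.span {fermatVar p 0, fermatVar p 1, fermatVar p 2} ^ (2 * p ^ n)) •
        H0 (Ideal.span {fermatVar p 0, fermatVar p 1, fermatVar p 2})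
          (FermatCubic p ⧸ (Ideal.span {fermatVar p 0, fermatVar p 1}).frobPow (p ^ n)) ≠ ⊥ ∧
    Ideal.span {fermatVar p 0, fermatVar p 1, fermatVar p 2} ^ (2 * p ^ n + 1) ≤
      Ideal.span {fermatVar p 0 ^ p ^ n, fermatVar p 1 ^ p ^ n} ∧
    ¬ Ideal.span {fermatVar p 0, fermatVar p 1, fermatVar p 2} ^ (2 * p ^ n) ≤
      Ideal.span {fermatVar p 0 ^ p ^ n, fermatVar p 1 ^ p ^ n} := by
  intro n
  set q := p ^ n with hqn
  have hq : 0 < q := pow_pos (Fact.out (p := p.Prime)).pos n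
  set x := fermatVar p 0
  set y := fermatVar p 1
  set z := fermatVar p 2
  set m : Ideal (FermatCubic p) := Ideal.span {x, y, z} with hm
  set J : Ideal (FermatCubic p) := Ideal.span {x ^ q, y ^ q} with hJ
  set Jf : Ideal (FermatCubic p) := (Ideal.span {x, y}).frobPow q with hJf
  have frobeq : Jf = J := frob_eq p q hq n hqn
  -- containment
  have hcon : m ^ (2 * q + 1) ≤ J := by
    refine span_triple_pow_le x y z (2 * q + 1) J ?_
    intro a b c habc
    exact mono_mem x y z q hq (fermat_rel p) a b c habc
  have hconf : m ^ (2 * q + 1) ≤ Jf := frobeq ▸ hcon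
  -- witness
  set w : FermatCubic p := x ^ (q - 1) * y ^ (q - 1) * z ^ 2 with hw
  have hwm : w ∈ m ^ (2 * q) := by
    have hx : x ^ (q - 1) ∈ m ^ (q - 1) :=
      Ideal.pow_mem_pow (Ideal.subset_span (Set.mem_insert _ _)) _
    have hy : y ^ (q - 1) ∈ m ^ (q - 1) :=
      Ideal.pow_mem_pow (Ideal.subset_span (Set.mem_insert_of_mem _ (Set.mem_insert _ _))) _
    have hz : z ^ 2 ∈ m ^ 2 :=
      Ideal.pow_mem_pow (Ideal.subset_span
        (Set.mem_insert_of_mem _ (Set.mem_insert_of_mem _ (Set.mem_singleton _)))) _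
    have := Ideal.mul_mem_mul (Ideal.mul_mem_mul hx hy) hz
    rw [show m ^ (q - 1) * m ^ (q - 1) * m ^ 2 = m ^ (q - 1 + (q - 1) + 2) by ring] at this
    have e : q - 1 + (q - 1) + 2 = 2 * q := by omega
    rwa [e] at this
  have hwnot : w ∉ J := witness_not_mem p q hq
  have hwnotf : w ∉ Jf := frobeq ▸ hwnot
  refine ⟨?_, ?_, hcon, fun hle => hwnot (hle hwm)⟩
  · refine eq_bot_iff.mpr (Submodule.smul_le.mpr ?_)
    intro r hr mm _
    obtain ⟨f, rfl⟩ := Ideal.Quotient.mk_surjective mm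
    rw [Submodule.mem_bot, quot_smul, Ideal.Quotient.eq_zero_iff_mem]
    exact Jf.mul_mem_right f (hconf hr)
  · intro hbot
    have h1 : (1 : FermatCubic p ⧸ Jf) ∈ H0 m (FermatCubic p ⧸ Jf) := by
      refine Submodule.mem_iSup_of_mem (2 * q + 1) ?_
      rw [Submodule.mem_torsionBySet_iff]
      rintro ⟨r, hr⟩
      show r • (1 : FermatCubic p ⧸ Jf) = 0
      have e1 : (1 : FermatCubic p ⧸ Jf) = Ideal.Quotient.mk Jf 1 := rfl
      rw [e1, quot_smul, mul_one, Ideal.Quotient.eq_zero_iff_mem]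
      exact hconf hr
    have hmem := Submodule.smul_mem_smul hwm h1
    rw [hbot, Submodule.mem_bot] at hmem
    apply hwnotf
    have e1 : (1 : FermatCubic p ⧸ Jf) = Ideal.Quotient.mk Jf 1 := rfl
    rw [e1, quot_smul, mul_one, Ideal.Quotient.eq_zero_iff_mem] at hmem
    exact hmem
end
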